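/- arXiv:1510.00832 — 5 statements merged into one kernel-verified Lean document; each statement's English description precedes it below -/
import Mathlib

section
/- For random variables $X_1, U_2, \ldots, U_N$ such that $U_2,\ldots,U_N \to X_1 \to Y_k$ form a Markov chain for each $k$, and for any subset $\mathcal{S}^c \subseteq \{2,\ldots,N\}$, the identity $I(X_1; U(\mathcal{S}^c)) - \sum_{k\in\mathcal{S}^c} I(U_k; U(\mathcal{S}^c_k), X_1 \mid Y_k) = \sum_{k\in\mathcal{S}^c}[I(U_k; Y_k) - I(U_k; U(\mathcal{S}^c_k))]$ holds, where $\mathcal{S}^c_k = \mathcal{S}^c \cap \{1,\ldots,k-1\}$. -/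
open MeasureTheory Finset

namespace DDF

variable {Ω : Type*} [MeasurableSpace Ω]

/-- Probability that a random variable `X` takes the value `a`. -/
noncomputable def pr (μ : Measure Ω) {α : Type*} (X : Ω → α) (a : α) : ℝ :=
  (μ (X ⁻¹' {a})).toReal

/-- Shannon entropy (base 2) of a finitely-valued random variable. -/
noncomputable def ent (μ : Measure Ω) {α : Type*} [Fintype α] (X : Ω → α) : ℝ :=
  -∑ a : α, pr μ X a * Real.logb 2 (pr μ X a)

/-- Conditional entropy `H(X | Y)`. -/
noncomputable def condEnt (μ : Measure Ω) {α β : Type*} [Fintype α] [Fintype β]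
    (X : Ω → α) (Y : Ω → β) : ℝ :=
  ent μ (fun ω => (X ω, Y ω)) - ent μ Y

/-- Mutual information `I(X; Y)`. -/
noncomputable def mi (μ : Measure Ω) {α β : Type*} [Fintype α] [Fintype β]
    (X : Ω → α) (Y : Ω → β) : ℝ :=
  ent μ X + ent μ Y - ent μ (fun ω => (X ω, Y ω))

/-- Conditional mutual information `I(X; Y | Z)`. -/
noncomputable def cmi (μ : Measure Ω) {α β γ : Type*} [Fintype α] [Fintype β] [Fintype γ]
    (X : Ω → α) (Y : Ω → β) (Z : Ω → γ) : ℝ :=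
  condEnt μ X Z - condEnt μ X (fun ω => (Y ω, Z ω))

/-- The tuple `(X_k : k ∈ S)` as a single random variable. -/
def tup {Ω α : Type*} (X : ℕ → Ω → α) (S : Finset ℕ) (ω : Ω) : {k // k ∈ S} → α :=
  fun k => X k.1 ω

end DDF

open DDF
section Aux
variable {Ω : Type*} [MeasurableSpace Ω] (μ : Measure Ω) [IsProbabilityMeasure μ]

lemma pr_nonneg {δ : Type*} (Z : Ω → δ) (d : δ) : 0 ≤ pr μ Z d :=
  ENNReal.toReal_nonneg

lemma pr_comp_inj {δ δ' : Type*} (f : δ → δ') (hf : Function.Injective f)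
    (Z : Ω → δ) (d : δ) : pr μ (fun ω => f (Z ω)) (f d) = pr μ Z d := by
  have : (fun ω => f (Z ω)) ⁻¹' {f d} = Z ⁻¹' {d} := by
    ext ω; simp [hf.eq_iff]
  unfold pr
  rw [this]

lemma pr_comp_notrange {δ δ' : Type*} (f : δ → δ')
    (Z : Ω → δ) (d' : δ') (h : d' ∉ Set.range f) :
    pr μ (fun ω => f (Z ω)) d' = 0 := by
  have he : (fun ω => f (Z ω)) ⁻¹' {d'} = ∅ := by
    ext ω
    simp only [Set.mem_preimage, Set.mem_singleton_iff, Set.mem_empty_iff_false, iff_false]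
    exact fun hc => h ⟨Z ω, hc⟩
  unfold pr
  rw [he, measure_empty, ENNReal.toReal_zero]

lemma ent_comp_inj {δ δ' : Type*} [Fintype δ] [Fintype δ'] (f : δ → δ')
    (hf : Function.Injective f) (Z : Ω → δ) :
    ent μ (fun ω => f (Z ω)) = ent μ Z := by
  classical
  unfold ent
  congr 1
  rw [← Finset.sum_subset (Finset.subset_univ ((Finset.univ : Finset δ).image f))]
  · rw [Finset.sum_image (fun a _ b _ h => hf h)]
    exact Finset.sum_congr rfl fun a _ => by rw [pr_comp_inj μ f hf]
  · intro b _ hb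
    rw [pr_comp_notrange μ f Z b (by simpa using hb)]
    simp

lemma ent_congr' {δ δ' : Type*} [Fintype δ] [Fintype δ'] (f : δ → δ')
    (hf : Function.Injective f) (Z : Ω → δ) (Z' : Ω → δ')
    (h : ∀ ω, Z' ω = f (Z ω)) : ent μ Z' = ent μ Z := by
  rw [show Z' = fun ω => f (Z ω) from funext h]
  exact ent_comp_inj μ f hf Z

lemma pr_sum_fiber {δ δ' : Type*} [Fintype δ] [DecidableEq δ'] (Z : Ω → δ)
    (hZ : ∀ d, MeasurableSet (Z ⁻¹' {d})) (g : δ → δ') (d' : δ') :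
    pr μ (fun ω => g (Z ω)) d' = ∑ d ∈ univ.filter (fun d => g d = d'), pr μ Z d := by
  have hs : (fun ω => g (Z ω)) ⁻¹' {d'}
      = ⋃ d ∈ (univ.filter (fun d => g d = d') : Finset δ), Z ⁻¹' {d} := by
    ext ω; simp
  have hdisj : ((univ.filter (fun d => g d = d') : Finset δ) : Set δ).PairwiseDisjoint
      (fun d => Z ⁻¹' {d}) := by
    intro d₁ _ d₂ _ hne
    simp only [Function.onFun, Set.disjoint_left]
    intro ω hω₁ hω₂
    exact hne (by
      simp only [Set.mem_preimage, Set.mem_singleton_iff] at hω₁ hω₂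
      rw [← hω₁, ← hω₂])
  unfold pr
  rw [hs, measure_biUnion_finset hdisj (fun d _ => hZ d),
    ENNReal.toReal_sum (fun d _ => measure_ne_top μ _)]


lemma fm_pair {δ ε : Type*} {V : Ω → δ} {Z : Ω → ε}
    (hV : ∀ d, MeasurableSet (V ⁻¹' {d})) (hZ : ∀ e, MeasurableSet (Z ⁻¹' {e})) :
    ∀ p, MeasurableSet ((fun ω => (V ω, Z ω)) ⁻¹' {p}) := by
  intro p
  have : (fun ω => (V ω, Z ω)) ⁻¹' {p} = V ⁻¹' {p.1} ∩ Z ⁻¹' {p.2} := by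
    ext ω; simp [Prod.ext_iff]
  rw [this]
  exact (hV _).inter (hZ _)

lemma pr_fst {δ ε : Type*} [Fintype δ] [Fintype ε] (V : Ω → δ) (Z : Ω → ε)
    (h : ∀ p, MeasurableSet ((fun ω => (V ω, Z ω)) ⁻¹' {p})) (d : δ) :
    pr μ V d = ∑ e : ε, pr μ (fun ω => (V ω, Z ω)) (d, e) := by
  classical
  have h1 := pr_sum_fiber μ (fun ω => (V ω, Z ω)) h Prod.fst d
  rw [show (univ.filter (fun p : δ × ε => p.1 = d))
      = univ.image (fun e : ε => (d, e)) from ?_] at h1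
  · rw [Finset.sum_image (fun a _ b _ hab => by
      simpa using congrArg Prod.snd hab)] at h1
    exact h1
  · ext p
    simp only [mem_filter, mem_univ, true_and, mem_image]
    constructor
    · intro h2; exact ⟨p.2, by rw [← h2]⟩
    · rintro ⟨e, rfl⟩; rfl

lemma pr_snd {δ ε : Type*} [Fintype δ] [Fintype ε] (V : Ω → δ) (Z : Ω → ε)
    (h : ∀ p, MeasurableSet ((fun ω => (V ω, Z ω)) ⁻¹' {p})) (e : ε) :
    pr μ Z e = ∑ d : δ, pr μ (fun ω => (V ω, Z ω)) (d, e) := by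
  classical
  have h1 := pr_sum_fiber μ (fun ω => (V ω, Z ω)) h Prod.snd e
  rw [show (univ.filter (fun p : δ × ε => p.2 = e))
      = univ.image (fun d : δ => (d, e)) from ?_] at h1
  · rw [Finset.sum_image (fun a _ b _ hab => by
      simpa using congrArg Prod.fst hab)] at h1
    exact h1
  · ext p
    simp only [mem_filter, mem_univ, true_and, mem_image]
    constructor
    · intro h2; exact ⟨p.1, by rw [← h2]⟩
    · rintro ⟨d, rfl⟩; rfl

lemma assoc_inj {δ α γ : Type*} :
    Function.Injective (fun q : (δ × α) × γ => (q.1.1, q.1.2, q.2)) :=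
  Function.LeftInverse.injective
    (g := fun p : δ × α × γ => ((p.1, p.2.1), p.2.2)) (fun q => rfl)

lemma markov_ent {δ α γ : Type*} [Fintype δ] [Fintype α] [Fintype γ]
    (W : Ω → δ) (X : Ω → α) (Y : Ω → γ)
    (hW : ∀ d, MeasurableSet (W ⁻¹' {d})) (hX : ∀ d, MeasurableSet (X ⁻¹' {d}))
    (hY : ∀ d, MeasurableSet (Y ⁻¹' {d}))
    (h : ∀ w x y, pr μ (fun ω => (W ω, X ω, Y ω)) (w, x, y) * pr μ X x
      = pr μ (fun ω => (W ω, X ω)) (w, x) * pr μ (fun ω => (X ω, Y ω)) (x, y)) :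
    ent μ (fun ω => (W ω, X ω, Y ω)) + ent μ X
      = ent μ (fun ω => (W ω, X ω)) + ent μ (fun ω => (X ω, Y ω)) := by
  classical
  set L : ℝ → ℝ := Real.logb 2 with hL
  have mWX : ∀ w x, pr μ (fun ω => (W ω, X ω)) (w, x)
      = ∑ y, pr μ (fun ω => (W ω, X ω, Y ω)) (w, x, y) := by
    intro w x
    rw [pr_fst μ (fun ω => (W ω, X ω)) Y (fm_pair (fm_pair hW hX) hY) (w, x)]
    exact Finset.sum_congr rfl fun y _ =>
      (pr_comp_inj μ _ assoc_inj (fun ω => ((W ω, X ω), Y ω)) ((w, x), y)).symm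
  have mXY : ∀ x y, pr μ (fun ω => (X ω, Y ω)) (x, y)
      = ∑ w, pr μ (fun ω => (W ω, X ω, Y ω)) (w, x, y) := fun x y =>
    pr_snd μ W (fun ω => (X ω, Y ω)) (fm_pair hW (fm_pair hX hY)) (x, y)
  have mX : ∀ x, pr μ X x = ∑ w, pr μ (fun ω => (W ω, X ω)) (w, x) := fun x =>
    pr_snd μ W X (fm_pair hW hX) x
  have pointwise : ∀ w x y,
      pr μ (fun ω => (W ω, X ω, Y ω)) (w, x, y) * L (pr μ (fun ω => (W ω, X ω, Y ω)) (w, x, y))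
        + pr μ (fun ω => (W ω, X ω, Y ω)) (w, x, y) * L (pr μ X x)
      = pr μ (fun ω => (W ω, X ω, Y ω)) (w, x, y) * L (pr μ (fun ω => (W ω, X ω)) (w, x))
        + pr μ (fun ω => (W ω, X ω, Y ω)) (w, x, y) * L (pr μ (fun ω => (X ω, Y ω)) (x, y)) := by
    intro w x y
    rcases eq_or_lt_of_le (pr_nonneg μ (fun ω => (W ω, X ω, Y ω)) (w, x, y)) with h0 | hpos
    · rw [← h0]; ring
    · have hWXpos : 0 < pr μ (fun ω => (W ω, X ω)) (w, x) := by
        refine lt_of_lt_of_le hpos ?_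
        rw [mWX]
        exact Finset.single_le_sum
          (f := fun y' => pr μ (fun ω => (W ω, X ω, Y ω)) (w, x, y'))
          (fun y' _ => pr_nonneg μ _ _) (mem_univ y)
      have hXYpos : 0 < pr μ (fun ω => (X ω, Y ω)) (x, y) := by
        refine lt_of_lt_of_le hpos ?_
        rw [mXY]
        exact Finset.single_le_sum
          (f := fun w' => pr μ (fun ω => (W ω, X ω, Y ω)) (w', x, y))
          (fun w' _ => pr_nonneg μ _ _) (mem_univ w)
      have hXpos : 0 < pr μ X x := by
        refine lt_of_lt_of_le hWXpos ?_
        rw [mX]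
        exact Finset.single_le_sum
          (f := fun w' => pr μ (fun ω => (W ω, X ω)) (w', x))
          (fun w' _ => pr_nonneg μ _ _) (mem_univ w)
      have heq := congrArg L (h w x y)
      rw [hL] at heq
      rw [Real.logb_mul hpos.ne' hXpos.ne', Real.logb_mul hWXpos.ne' hXYpos.ne'] at heq
      have heq' : L (pr μ (fun ω => (W ω, X ω, Y ω)) (w, x, y)) + L (pr μ X x)
          = L (pr μ (fun ω => (W ω, X ω)) (w, x)) + L (pr μ (fun ω => (X ω, Y ω)) (x, y)) := heq
      linear_combination (pr μ (fun ω => (W ω, X ω, Y ω)) (w, x, y)) * heq'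
  unfold ent
  rw [← neg_add, ← neg_add, neg_inj]
  have e3 : ∑ p : δ × α × γ, pr μ (fun ω => (W ω, X ω, Y ω)) p
        * L (pr μ (fun ω => (W ω, X ω, Y ω)) p)
      = ∑ w, ∑ x, ∑ y, pr μ (fun ω => (W ω, X ω, Y ω)) (w, x, y)
        * L (pr μ (fun ω => (W ω, X ω, Y ω)) (w, x, y)) := by
    rw [Fintype.sum_prod_type]
    exact Finset.sum_congr rfl fun w _ => Fintype.sum_prod_type _
  have eX : ∑ x, pr μ X x * L (pr μ X x)
      = ∑ w, ∑ x, ∑ y, pr μ (fun ω => (W ω, X ω, Y ω)) (w, x, y) * L (pr μ X x) := by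
    rw [Finset.sum_comm]
    refine Finset.sum_congr rfl fun x _ => ?_
    rw [mX, Finset.sum_mul]
    refine Finset.sum_congr rfl fun w _ => ?_
    rw [mWX, Finset.sum_mul]
  have e2 : ∑ q : δ × α, pr μ (fun ω => (W ω, X ω)) q * L (pr μ (fun ω => (W ω, X ω)) q)
      = ∑ w, ∑ x, ∑ y, pr μ (fun ω => (W ω, X ω, Y ω)) (w, x, y)
        * L (pr μ (fun ω => (W ω, X ω)) (w, x)) := by
    rw [Fintype.sum_prod_type]
    refine Finset.sum_congr rfl fun w _ => Finset.sum_congr rfl fun x _ => ?_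
    rw [mWX, Finset.sum_mul]
  have e1 : ∑ r : α × γ, pr μ (fun ω => (X ω, Y ω)) r * L (pr μ (fun ω => (X ω, Y ω)) r)
      = ∑ w, ∑ x, ∑ y, pr μ (fun ω => (W ω, X ω, Y ω)) (w, x, y)
        * L (pr μ (fun ω => (X ω, Y ω)) (x, y)) := by
    rw [Fintype.sum_prod_type]
    rw [show (∑ x, ∑ y, pr μ (fun ω => (X ω, Y ω)) (x, y) * L (pr μ (fun ω => (X ω, Y ω)) (x, y)))
        = ∑ x, ∑ y, ∑ w, pr μ (fun ω => (W ω, X ω, Y ω)) (w, x, y)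
          * L (pr μ (fun ω => (X ω, Y ω)) (x, y)) from
      Finset.sum_congr rfl fun x _ => Finset.sum_congr rfl fun y _ => by
        rw [mXY, Finset.sum_mul]]
    calc (∑ x, ∑ y, ∑ w, pr μ (fun ω => (W ω, X ω, Y ω)) (w, x, y)
          * L (pr μ (fun ω => (X ω, Y ω)) (x, y)))
        = ∑ x, ∑ w, ∑ y, pr μ (fun ω => (W ω, X ω, Y ω)) (w, x, y)
          * L (pr μ (fun ω => (X ω, Y ω)) (x, y)) :=
          Finset.sum_congr rfl fun x _ => Finset.sum_comm
      _ = ∑ w, ∑ x, ∑ y, pr μ (fun ω => (W ω, X ω, Y ω)) (w, x, y)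
          * L (pr μ (fun ω => (X ω, Y ω)) (x, y)) := Finset.sum_comm
  rw [e3, eX, e2, e1, ← Finset.sum_add_distrib, ← Finset.sum_add_distrib]
  refine Finset.sum_congr rfl fun w _ => ?_
  rw [← Finset.sum_add_distrib, ← Finset.sum_add_distrib]
  refine Finset.sum_congr rfl fun x _ => ?_
  rw [← Finset.sum_add_distrib, ← Finset.sum_add_distrib]
  exact Finset.sum_congr rfl fun y _ => pointwise w x y

lemma assoc_inj' {δ α γ : Type*} :
    Function.Injective (fun p : δ × α × γ => ((p.1, p.2.1), p.2.2)) :=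
  Function.LeftInverse.injective
    (g := fun q : (δ × α) × γ => (q.1.1, q.1.2, q.2)) (fun p => rfl)

lemma big_inj {A B C D : Type*} :
    Function.Injective (fun p : A × (B × C) × D => ((p.1, p.2.1.1), p.2.1.2, p.2.2)) :=
  Function.LeftInverse.injective
    (g := fun q : (A × B) × C × D => (q.1.1, (q.1.2, q.2.1), q.2.2)) (fun p => rfl)

lemma unit_inj {A B : Type*} :
    Function.Injective (fun p : A × B => (p.1, p.2, (() : Unit))) :=
  Function.LeftInverse.injective
    (g := fun q : A × B × Unit => (q.1, q.2.1)) (fun p => rfl)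

lemma pr_comp_fst {δ δ' ε : Type*} [Fintype δ] [Fintype ε] [DecidableEq δ'] (Z : Ω → δ) (V : Ω → ε)
    (h : ∀ p, MeasurableSet ((fun ω => (Z ω, V ω)) ⁻¹' {p})) (g : δ → δ') (w : δ') (e : ε) :
    pr μ (fun ω => (g (Z ω), V ω)) (w, e)
      = ∑ u ∈ univ.filter (fun u => g u = w), pr μ (fun ω => (Z ω, V ω)) (u, e) := by
  classical
  have h1 := pr_sum_fiber μ (fun ω => (Z ω, V ω)) h (fun p => (g p.1, p.2)) (w, e)
  rw [show (univ.filter (fun p : δ × ε => (g p.1, p.2) = (w, e)))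
      = (univ.filter (fun u : δ => g u = w)).image (fun u => (u, e)) from ?_] at h1
  · rw [Finset.sum_image (fun a _ b _ hab => by simpa using congrArg Prod.fst hab)] at h1
    exact h1
  · ext p
    obtain ⟨u, v⟩ := p
    simp only [mem_filter, mem_univ, true_and, mem_image, Prod.mk.injEq]
    constructor
    · rintro ⟨h2, h3⟩; exact ⟨u, h2, rfl, h3.symm⟩
    · rintro ⟨u', hu', rfl, rfl⟩; exact ⟨hu', rfl⟩

lemma markov_comp {δ δ' α γ : Type*} [Fintype δ] [Fintype α] [Fintype γ]
    (Z : Ω → δ) (X : Ω → α) (Y : Ω → γ)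
    (hZ : ∀ d, MeasurableSet (Z ⁻¹' {d})) (hX : ∀ d, MeasurableSet (X ⁻¹' {d}))
    (hY : ∀ d, MeasurableSet (Y ⁻¹' {d})) (g : δ → δ')
    (h : ∀ u x y, pr μ (fun ω => (Z ω, X ω, Y ω)) (u, x, y) * pr μ X x
      = pr μ (fun ω => (Z ω, X ω)) (u, x) * pr μ (fun ω => (X ω, Y ω)) (x, y)) :
    ∀ w x y, pr μ (fun ω => (g (Z ω), X ω, Y ω)) (w, x, y) * pr μ X x
      = pr μ (fun ω => (g (Z ω), X ω)) (w, x) * pr μ (fun ω => (X ω, Y ω)) (x, y) := by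
  classical
  intro w x y
  rw [pr_comp_fst μ Z (fun ω => (X ω, Y ω)) (fm_pair hZ (fm_pair hX hY)) g w (x, y),
    pr_comp_fst μ Z X (fm_pair hZ hX) g w x, Finset.sum_mul, Finset.sum_mul]
  exact Finset.sum_congr rfl fun u _ => h u x y

lemma ent_unit : ent μ (fun _ : Ω => (() : Unit)) = 0 := by
  have h1 : pr μ (fun _ : Ω => (() : Unit)) () = 1 := by
    have : (fun _ : Ω => (() : Unit)) ⁻¹' {()} = Set.univ := by ext ω; simp
    unfold pr
    rw [this, measure_univ, ENNReal.toReal_one]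
  unfold ent
  rw [Fintype.sum_unique]
  rw [show (default : Unit) = () from rfl, h1]
  simp

lemma ent_pair_unit {δ : Type*} [Fintype δ] (V : Ω → δ) :
    ent μ (fun ω => (V ω, (() : Unit))) = ent μ V :=
  ent_congr' μ (fun v => (v, ())) (fun a b h => congrArg Prod.fst h) V _ (fun ω => rfl)

lemma telescope {β ζ : Type*} [Fintype β] [Fintype ζ] (U : ℕ → Ω → β) (Z : Ω → ζ)
    (Sc : Finset ℕ) :
    ∑ k ∈ Sc, (ent μ (fun ω => (U k ω, tup U (Sc.filter (· < k)) ω, Z ω))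
        - ent μ (fun ω => (tup U (Sc.filter (· < k)) ω, Z ω)))
      = ent μ (fun ω => (tup U Sc ω, Z ω)) - ent μ Z := by
  classical
  induction Sc using Finset.induction_on_max with
  | empty =>
    haveI : IsEmpty {k : ℕ // k ∈ (∅ : Finset ℕ)} :=
      ⟨fun j => absurd j.2 (Finset.notMem_empty _)⟩
    have h1 : ent μ (fun ω => (tup U (∅ : Finset ℕ) ω, Z ω)) = ent μ Z :=
      ent_congr' μ (fun z => ((fun j => isEmptyElim j : {k : ℕ // k ∈ (∅ : Finset ℕ)} → β), z))
        (fun a b h => congrArg Prod.snd h) Z _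
        (fun ω => Prod.ext_iff.mpr ⟨Subsingleton.elim _ _, rfl⟩)
    rw [Finset.sum_empty, h1]
    ring
  | insert a s ha ih =>
    have hanotin : a ∉ s := fun h => lt_irrefl a (ha a h)
    have hfilter : ∀ k ∈ s, (insert a s).filter (· < k) = s.filter (· < k) := by
      intro k hk
      rw [Finset.filter_insert, if_neg (by simpa using (ha k hk).le)]
    have hfa : (insert a s).filter (· < a) = s := by
      rw [Finset.filter_insert, if_neg (by simp), Finset.filter_true_of_mem (fun x hx => ha x hx)]
    rw [Finset.sum_insert hanotin, hfa,
      Finset.sum_congr rfl (fun k hk => by rw [hfilter k hk]), ih]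
    have hins : ent μ (fun ω => (tup U (insert a s) ω, Z ω))
        = ent μ (fun ω => (U a ω, tup U s ω, Z ω)) := by
      refine ent_congr' μ
        (fun p : β × ({j // j ∈ s} → β) × ζ =>
          ((fun j : {j // j ∈ insert a s} =>
            if h : (j.1 : ℕ) = a then p.1
            else p.2.1 ⟨j.1, (Finset.mem_insert.mp j.2).resolve_left h⟩), p.2.2))
        ?_ _ _ ?_
      · intro p q hpq
        obtain ⟨pb, pv, pz⟩ := p
        obtain ⟨qb, qv, qz⟩ := q
        simp only [Prod.mk.injEq] at hpq ⊢
        obtain ⟨h1, h2⟩ := hpq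
        refine ⟨?_, ?_, h2⟩
        · have := congrFun h1 ⟨a, Finset.mem_insert_self a s⟩
          simpa using this
        · funext j
          obtain ⟨v, hvs⟩ := j
          have hja : v ≠ a := fun h => hanotin (h ▸ hvs)
          have := congrFun h1 ⟨v, Finset.mem_insert_of_mem hvs⟩
          simpa [dif_neg hja] using this
      · intro ω
        refine Prod.ext_iff.mpr ⟨?_, rfl⟩
        funext j
        dsimp only [tup]
        split_ifs with hja
        · rw [hja]
        · rfl
    rw [hins]
    ring

end Aux


set_option maxHeartbeats 2000000 in
open DDF in
/-- Marton-form identity (Appendix A): for `U_2^N → X_1 → Y_k` Markov chains,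
`I(X_1; U(Sᶜ)) - ∑_{k∈Sᶜ} I(U_k; U(Sᶜ_k), X_1 | Y_k) = ∑_{k∈Sᶜ} [I(U_k; Y_k) - I(U_k; U(Sᶜ_k))]`. -/
theorem stmt0 {Ω α β γ : Type*} [MeasurableSpace Ω]
    [MeasurableSpace α] [MeasurableSingletonClass α] [Fintype α]
    [MeasurableSpace β] [MeasurableSingletonClass β] [Fintype β]
    [MeasurableSpace γ] [MeasurableSingletonClass γ] [Fintype γ]
    (μ : Measure Ω) [IsProbabilityMeasure μ] (N : ℕ)
    (X1 : Ω → α) (U : ℕ → Ω → β) (Y : ℕ → Ω → γ)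
    (hX1 : Measurable X1) (hU : ∀ k, Measurable (U k)) (hY : ∀ k, Measurable (Y k))
    -- Markov chain `(U_2, …, U_N) → X_1 → Y_k` for every `k ∈ [2:N]`:
    (hmarkov : ∀ k ∈ Finset.Icc 2 N, ∀ (u : {j // j ∈ Finset.Icc 2 N} → β) (x : α) (y : γ),
      pr μ (fun ω => (tup U (Finset.Icc 2 N) ω, X1 ω, Y k ω)) (u, x, y) * pr μ X1 x
        = pr μ (fun ω => (tup U (Finset.Icc 2 N) ω, X1 ω)) (u, x)
            * pr μ (fun ω => (X1 ω, Y k ω)) (x, y))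
    (Sc : Finset ℕ) (hSc : Sc ⊆ Finset.Icc 2 N) :
    mi μ X1 (tup U Sc)
        - ∑ k ∈ Sc, cmi μ (U k) (fun ω => (tup U (Sc.filter (· < k)) ω, X1 ω)) (Y k)
      = ∑ k ∈ Sc, (mi μ (U k) (Y k) - mi μ (U k) (tup U (Sc.filter (· < k)))) := by
  classical
  have hXm : ∀ x, MeasurableSet (X1 ⁻¹' {x}) := fun x => hX1 (measurableSet_singleton x)
  have hUm : ∀ k (b : β), MeasurableSet ((U k) ⁻¹' {b}) :=
    fun k b => hU k (measurableSet_singleton b)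
  have hYm : ∀ k (c : γ), MeasurableSet ((Y k) ⁻¹' {c}) :=
    fun k c => hY k (measurableSet_singleton c)
  have htupm : ∀ (S : Finset ℕ) (v : {j // j ∈ S} → β), MeasurableSet (tup U S ⁻¹' {v}) := by
    intro S v
    have : tup U S ⁻¹' {v} = ⋂ j : {j // j ∈ S}, (U j.1) ⁻¹' {v j} := by
      ext ω
      simp [tup, funext_iff]
    rw [this]
    exact MeasurableSet.iInter fun j => hUm j.1 (v j)
  -- Markov consequences per k
  have F1 : ∀ k ∈ Sc,
      ent μ (fun ω => (U k ω, (tup U (Sc.filter (· < k)) ω, X1 ω), Y k ω))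
        - ent μ (fun ω => ((tup U (Sc.filter (· < k)) ω, X1 ω), Y k ω))
      = ent μ (fun ω => (U k ω, tup U (Sc.filter (· < k)) ω, X1 ω))
        - ent μ (fun ω => (tup U (Sc.filter (· < k)) ω, X1 ω)) := by
    intro k hk
    have hk2N : k ∈ Finset.Icc 2 N := hSc hk
    have hmem : ∀ j : {j // j ∈ Sc.filter (· < k)}, (j.1 : ℕ) ∈ Finset.Icc 2 N :=
      fun j => hSc (Finset.mem_of_mem_filter j.1 j.2)
    have hm1 := markov_comp μ (tup U (Finset.Icc 2 N)) X1 (Y k) (htupm _) hXm (hYm k)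
      (fun v => ((v ⟨k, hk2N⟩, fun j : {j // j ∈ Sc.filter (· < k)} => v ⟨j.1, hmem j⟩)
        : β × ({j // j ∈ Sc.filter (· < k)} → β)))
      (hmarkov k hk2N)
    have hm2 := markov_comp μ (tup U (Finset.Icc 2 N)) X1 (Y k) (htupm _) hXm (hYm k)
      (fun v => (fun j : {j // j ∈ Sc.filter (· < k)} => v ⟨j.1, hmem j⟩))
      (hmarkov k hk2N)
    have e1 := markov_ent μ (fun ω => (U k ω, tup U (Sc.filter (· < k)) ω)) X1 (Y k)
      (fm_pair (hUm k) (htupm _)) hXm (hYm k) hm1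
    have e2 := markov_ent μ (tup U (Sc.filter (· < k))) X1 (Y k)
      (htupm _) hXm (hYm k) hm2
    -- reassociations
    have c1 : ent μ (fun ω => ((U k ω, tup U (Sc.filter (· < k)) ω), X1 ω, Y k ω))
        = ent μ (fun ω => (U k ω, (tup U (Sc.filter (· < k)) ω, X1 ω), Y k ω)) :=
      ent_congr' μ _ big_inj _ _ (fun ω => rfl)
    have c2 : ent μ (fun ω => (tup U (Sc.filter (· < k)) ω, X1 ω, Y k ω))
        = ent μ (fun ω => ((tup U (Sc.filter (· < k)) ω, X1 ω), Y k ω)) :=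
      ent_congr' μ _ assoc_inj _ _ (fun ω => rfl)
    have c3 : ent μ (fun ω => ((U k ω, tup U (Sc.filter (· < k)) ω), X1 ω))
        = ent μ (fun ω => (U k ω, tup U (Sc.filter (· < k)) ω, X1 ω)) :=
      ent_congr' μ _ assoc_inj' _ _ (fun ω => rfl)
    linarith [e1, e2, c1, c2, c3]
  have F2 := telescope μ U X1 Sc
  have F3 : ∑ k ∈ Sc, (ent μ (fun ω => (U k ω, tup U (Sc.filter (· < k)) ω))
      - ent μ (tup U (Sc.filter (· < k)))) = ent μ (tup U Sc) := by
    have h0 := telescope μ U (fun _ => (() : Unit)) Sc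
    rw [ent_unit μ, ent_pair_unit μ (tup U Sc), sub_zero] at h0
    rw [← h0]
    refine Finset.sum_congr rfl fun k _ => ?_
    rw [ent_pair_unit μ (tup U (Sc.filter (· < k)))]
    congr 1
    exact (ent_congr' μ _ unit_inj
      (fun ω => (U k ω, tup U (Sc.filter (· < k)) ω)) _ (fun ω => rfl)).symm
  have hswap : ent μ (fun ω => (X1 ω, tup U Sc ω))
      = ent μ (fun ω => (tup U Sc ω, X1 ω)) :=
    ent_congr' μ Prod.swap Prod.swap_injective _ _ (fun ω => rfl)
  simp only [mi, cmi, condEnt]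
  have hsumL : ∑ k ∈ Sc,
      ((ent μ (fun ω => (U k ω, Y k ω)) - ent μ (Y k))
        - (ent μ (fun ω => (U k ω, (tup U (Sc.filter (· < k)) ω, X1 ω), Y k ω))
          - ent μ (fun ω => ((tup U (Sc.filter (· < k)) ω, X1 ω), Y k ω))))
      = (∑ k ∈ Sc, (ent μ (fun ω => (U k ω, Y k ω)) - ent μ (Y k)))
        - (ent μ (fun ω => (tup U Sc ω, X1 ω)) - ent μ X1) := by
    rw [Finset.sum_sub_distrib]
    congr 1
    rw [← F2]
    exact Finset.sum_congr rfl fun k hk => F1 k hk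
  have hsumR : ∑ k ∈ Sc,
      ((ent μ (U k) + ent μ (Y k) - ent μ (fun ω => (U k ω, Y k ω)))
        - (ent μ (U k) + ent μ (tup U (Sc.filter (· < k)))
          - ent μ (fun ω => (U k ω, tup U (Sc.filter (· < k)) ω))))
      = (∑ k ∈ Sc, (ent μ (Y k) - ent μ (fun ω => (U k ω, Y k ω)))) + ent μ (tup U Sc) := by
    rw [Finset.sum_congr rfl (fun k (_ : k ∈ Sc) => show _ =
        (ent μ (Y k) - ent μ (fun ω => (U k ω, Y k ω)))
          + (ent μ (fun ω => (U k ω, tup U (Sc.filter (· < k)) ω))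
            - ent μ (tup U (Sc.filter (· < k)))) by ring),
      Finset.sum_add_distrib, F3]
  rw [hsumL, hsumR]
  have hneg : ∑ k ∈ Sc, (ent μ (Y k) - ent μ (fun ω => (U k ω, Y k ω)))
      = -∑ k ∈ Sc, (ent μ (fun ω => (U k ω, Y k ω)) - ent μ (Y k)) := by
    rw [← Finset.sum_neg_distrib]
    exact Finset.sum_congr rfl fun k _ => by ring
  rw [hneg]
  linarith [hswap]
end

section
/- Let $K$ be an $N \times N$ positive semidefinite real matrix with diagonal entries $K_{jj} \le P$ for some $P > 0$, let $\mathcal{S} \subseteq \{1,\ldots,N\}$, and let $K(\mathcal{S})$ denote the principal submatrix of $K$ indexed by $\mathcal{S}$ and $G(\mathcal{S})$ any real matrix with $|\mathcal{S}|$ columns. Then $\tfrac{1}{2}\log\det(I + G(\mathcal{S}) K(\mathcal{S}) G(\mathcal{S})^T) \le \tfrac{1}{2}\log\det(I + P\, G(\mathcal{S}) G(\mathcal{S})^T) + \tfrac{|\mathcal{S}|}{2}$. -/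
open Matrix
open scoped MatrixOrder

set_option linter.unusedSectionVars false
set_option maxHeartbeats 1000000

section Helpers

variable {n : Type*} [Fintype n] [DecidableEq n]


lemma herm_transpose {A : Matrix n n ℝ} (hA : A.IsHermitian) : Aᵀ = A := by
  rw [← conjTranspose_eq_transpose_of_trivial]; exact hA

lemma psd_smul {c : ℝ} (hc : 0 ≤ c) {A : Matrix n n ℝ} (hA : A.PosSemidef) :
    (c • A).PosSemidef := by
  refine Matrix.PosSemidef.of_dotProduct_mulVec_nonneg ?_ fun x => ?_
  · unfold Matrix.IsHermitian
    rw [conjTranspose_smul, hA.1]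
    simp
  · rw [smul_mulVec, dotProduct_smul, smul_eq_mul]
    exact mul_nonneg hc (hA.dotProduct_mulVec_nonneg x)

lemma psd_conj {A : Matrix n n ℝ} (hA : A.PosSemidef) {k : Type*} [Fintype k]
    (B : Matrix k n ℝ) : (B * A * Bᵀ).PosSemidef := by
  have := hA.mul_mul_conjTranspose_same B
  rwa [conjTranspose_eq_transpose_of_trivial] at this

lemma eig_le_one {C : Matrix n n ℝ} (hC : C.PosSemidef) (h1 : ((1 : Matrix n n ℝ) - C).PosSemidef)
    (i : n) : hC.1.eigenvalues i ≤ 1 := by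
  have hvv : star (⇑(hC.1.eigenvectorBasis i)) ⬝ᵥ ⇑(hC.1.eigenvectorBasis i) = 1 := by
    have hn := hC.1.eigenvectorBasis.orthonormal.1 i
    have h2 : (inner ℝ (hC.1.eigenvectorBasis i) (hC.1.eigenvectorBasis i) : ℝ) = 1 := by
      rw [real_inner_self_eq_norm_sq, hn]; norm_num
    rwa [EuclideanSpace.inner_eq_star_dotProduct, dotProduct_comm] at h2
  have h0 := h1.dotProduct_mulVec_nonneg (⇑(hC.1.eigenvectorBasis i))
  rw [sub_mulVec, one_mulVec, dotProduct_sub, hC.1.mulVec_eigenvectorBasis, dotProduct_smul,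
    hvv, smul_eq_mul, mul_one] at h0
  linarith

lemma det_le_one_of {C : Matrix n n ℝ} (hC : C.PosSemidef)
    (h1 : ((1 : Matrix n n ℝ) - C).PosSemidef) : C.det ≤ 1 := by
  rw [hC.1.det_eq_prod_eigenvalues]
  push_cast
  exact Finset.prod_le_one (fun i _ => hC.eigenvalues_nonneg i) (fun i _ => eig_le_one hC h1 i)

lemma det_le_det_of {X Y : Matrix n n ℝ} (hX : X.PosSemidef) (hY : Y.PosDef)
    (hXY : (Y - X).PosSemidef) : X.det ≤ Y.det := by
  set S := CFC.sqrt Y with hSdef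
  have hSpsd : S.PosSemidef := (CFC.sqrt_nonneg Y).posSemidef
  have hSS : S * S = Y := CFC.sqrt_mul_sqrt_self Y hY.posSemidef.nonneg
  have hdetS : S.det ≠ 0 := by
    intro h
    have : Y.det = 0 := by rw [← hSS, det_mul, h, zero_mul]
    exact hY.det_pos.ne' this
  have hSunit : IsUnit S.det := isUnit_iff_ne_zero.mpr hdetS
  have hinv : S * S⁻¹ = 1 := mul_nonsing_inv S hSunit
  have hinv' : S⁻¹ * S = 1 := nonsing_inv_mul S hSunit
  have hSiH : S⁻¹.IsHermitian := hSpsd.1.inv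
  have e1 : ∀ X : Matrix n n ℝ, S * (S⁻¹ * X) = X := by
    intro X; rw [← Matrix.mul_assoc, hinv, Matrix.one_mul]
  have hCpsd : (S⁻¹ * X * S⁻¹).PosSemidef := by
    have := psd_conj hX S⁻¹
    rwa [herm_transpose hSiH] at this
  have hone : S⁻¹ * Y * S⁻¹ = 1 := by
    rw [← hSS]
    simp only [Matrix.mul_assoc, hinv, hinv', Matrix.mul_one]
  have h1C : ((1 : Matrix n n ℝ) - S⁻¹ * X * S⁻¹).PosSemidef := by
    have hrw : (1 : Matrix n n ℝ) - S⁻¹ * X * S⁻¹ = S⁻¹ * (Y - X) * S⁻¹ := by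
      rw [Matrix.mul_sub, Matrix.sub_mul, hone]
    rw [hrw]
    have := psd_conj hXY S⁻¹
    rwa [herm_transpose hSiH] at this
  have hXC : X = S * (S⁻¹ * X * S⁻¹) * S := by
    simp only [Matrix.mul_assoc, hinv', Matrix.mul_one]
    exact (e1 X).symm
  have hdet : X.det = Y.det * (S⁻¹ * X * S⁻¹).det := by
    conv_lhs => rw [hXC]
    simp only [← hSS, det_mul]; ring
  rw [hdet]
  calc Y.det * (S⁻¹ * X * S⁻¹).det ≤ Y.det * 1 :=
        mul_le_mul_of_nonneg_left (det_le_one_of hCpsd h1C) hY.det_pos.le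
    _ = Y.det := mul_one _

lemma trace_eq_sum_eig {A : Matrix n n ℝ} (hA : A.IsHermitian) :
    A.trace = ∑ i, hA.eigenvalues i := by
  rw [hA.trace_eq_sum_eigenvalues]
  simp

lemma det_le_two_pow {B : Matrix n n ℝ} (hB : B.PosSemidef)
    (htr : B.trace ≤ 2 * (Fintype.card n)) : B.det ≤ 2 ^ (Fintype.card n) := by
  rcases Nat.eq_zero_or_pos (Fintype.card n) with h0 | hpos
  · have : IsEmpty n := Fintype.card_eq_zero_iff.mp h0
    rw [Matrix.det_isEmpty, h0, pow_zero]
  · set m := Fintype.card n with hm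
    have hmR : (0 : ℝ) < (m : ℝ) := by exact_mod_cast hpos
    have hsum : ∑ i, hB.1.eigenvalues i ≤ 2 * m := by
      rw [← trace_eq_sum_eig hB.1]; exact htr
    have hAMGM := Real.geom_mean_le_arith_mean_weighted Finset.univ (fun _ => (m : ℝ)⁻¹)
        (fun i => hB.1.eigenvalues i) (fun i _ => by positivity)
        (by simp [Finset.card_univ, ← hm]; field_simp) (fun i _ => hB.eigenvalues_nonneg i)
    rw [Real.finset_prod_rpow _ _ (fun i _ => hB.eigenvalues_nonneg i)] at hAMGM
    have hrhs : ∑ i, (m : ℝ)⁻¹ * hB.1.eigenvalues i ≤ 2 := by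
      rw [← Finset.mul_sum]
      calc (m : ℝ)⁻¹ * ∑ i, hB.1.eigenvalues i ≤ (m : ℝ)⁻¹ * (2 * m) := by
            apply mul_le_mul_of_nonneg_left hsum (by positivity)
        _ = 2 := by field_simp
    have hle2 : (∏ i, hB.1.eigenvalues i) ^ ((m : ℝ)⁻¹) ≤ 2 := le_trans hAMGM hrhs
    have hprodnn : 0 ≤ ∏ i, hB.1.eigenvalues i :=
      Finset.prod_nonneg fun i _ => hB.eigenvalues_nonneg i
    have h2 := Real.rpow_le_rpow (by positivity) hle2 hmR.le
    rw [← Real.rpow_mul hprodnn, inv_mul_cancel₀ hmR.ne', Real.rpow_one,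
      Real.rpow_natCast] at h2
    rw [hB.1.det_eq_prod_eigenvalues]
    exact_mod_cast h2

end Helpers

lemma key_det {m ι : Type*} [Fintype m] [DecidableEq m] [Fintype ι] [DecidableEq ι]
    {P : ℝ} (hP : 0 < P) {K : Matrix m m ℝ} (hK : K.PosSemidef) (hdiag : ∀ j, K j j ≤ P)
    (G : Matrix ι m ℝ) :
    (1 + G * K * Gᵀ).det ≤ (1 + P • (G * Gᵀ)).det * 2 ^ (Fintype.card m) := by
  have hGGt : (G * Gᵀ).PosSemidef := by
    have := Matrix.posSemidef_self_mul_conjTranspose G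
    rwa [conjTranspose_eq_transpose_of_trivial] at this
  have hGtG : (Gᵀ * G).PosSemidef := by
    have := Matrix.posSemidef_conjTranspose_mul_self G
    rwa [conjTranspose_eq_transpose_of_trivial] at this
  set M : Matrix ι ι ℝ := 1 + P • (G * Gᵀ) with hMdef
  have hMpd : M.PosDef := Matrix.PosDef.one.add_posSemidef (psd_smul hP.le hGGt)
  set N : Matrix m m ℝ := 1 + P • (Gᵀ * G) with hNdef
  have hNpd : N.PosDef := Matrix.PosDef.one.add_posSemidef (psd_smul hP.le hGtG)
  have hMdetU : IsUnit M.det := isUnit_iff_ne_zero.mpr hMpd.det_pos.ne'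
  have hNdetU : IsUnit N.det := isUnit_iff_ne_zero.mpr hNpd.det_pos.ne'
  set S : Matrix ι ι ℝ := CFC.sqrt M with hSdef
  have hSpsd : S.PosSemidef := (CFC.sqrt_nonneg M).posSemidef
  have hSS : S * S = M := CFC.sqrt_mul_sqrt_self M hMpd.posSemidef.nonneg
  have hdetS : S.det ≠ 0 := by
    intro h
    have : M.det = 0 := by rw [← hSS, det_mul, h, zero_mul]
    exact hMpd.det_pos.ne' this
  have hSunit : IsUnit S.det := isUnit_iff_ne_zero.mpr hdetS
  have hinv : S * S⁻¹ = 1 := mul_nonsing_inv S hSunit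
  have hinv' : S⁻¹ * S = 1 := nonsing_inv_mul S hSunit
  have hSiH : S⁻¹.IsHermitian := hSpsd.1.inv
  have hMinv_eq : S⁻¹ * S⁻¹ = M⁻¹ := by rw [← hSS, Matrix.mul_inv_rev]
  have hMinvPsd : M⁻¹.PosSemidef := hMpd.inv.posSemidef
  -- abbreviations
  set H : Matrix ι ι ℝ := S⁻¹ * (G * K * Gᵀ) * S⁻¹ with hHdef
  set Q : Matrix m m ℝ := Gᵀ * M⁻¹ * G with hQdef
  set R : Matrix m m ℝ := CFC.sqrt K with hRdef
  have hRpsd : R.PosSemidef := (CFC.sqrt_nonneg K).posSemidef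
  have hRR : R * R = K := CFC.sqrt_mul_sqrt_self K hK.nonneg
  -- Step 1 : 1 + G K Gᵀ = S (M⁻¹ + H) S
  have e1 : ∀ X : Matrix ι ι ℝ, S * (S⁻¹ * X) = X := fun X => by
    rw [← Matrix.mul_assoc, hinv, Matrix.one_mul]
  have e2 : ∀ X : Matrix ι ι ℝ, S⁻¹ * (S * X) = X := fun X => by
    rw [← Matrix.mul_assoc, hinv', Matrix.one_mul]
  have step1 : S * (M⁻¹ + H) * S = 1 + G * K * Gᵀ := by
    rw [hHdef, ← hMinv_eq]
    simp only [Matrix.mul_add, Matrix.add_mul, Matrix.mul_assoc, hinv, hinv',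
      Matrix.mul_one, Matrix.one_mul, e1, e2]
  have d1 : (1 + G * K * Gᵀ).det = M.det * (M⁻¹ + H).det := by
    rw [← step1]
    simp only [det_mul, ← hSS, det_mul]; ring
  -- H is PSD
  have hHpsd : H.PosSemidef := by
    have := psd_conj hK (S⁻¹ * G)
    rw [transpose_mul, herm_transpose hSiH] at this
    rw [hHdef]
    convert this using 1
    simp only [Matrix.mul_assoc]
  -- Step 2
  have hX1 : (M⁻¹ + H).PosSemidef := hMinvPsd.add hHpsd
  have hY1 : (1 + H).PosDef := Matrix.PosDef.one.add_posSemidef hHpsd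
  have step2 : (M⁻¹ + H).det ≤ (1 + H).det := by
    refine det_le_det_of hX1 hY1 ?_
    have h1M : (1 : Matrix ι ι ℝ) + H - (M⁻¹ + H) = S⁻¹ * (P • (G * Gᵀ)) * S⁻¹ := by
      have hone : S⁻¹ * M * S⁻¹ = 1 := by
        rw [← hSS]
        simp only [Matrix.mul_assoc, hinv, hinv', Matrix.mul_one]
      have : S⁻¹ * (P • (G * Gᵀ)) * S⁻¹ = S⁻¹ * M * S⁻¹ - S⁻¹ * (1 : Matrix ι ι ℝ) * S⁻¹ := by
        rw [← Matrix.sub_mul, ← Matrix.mul_sub]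
        congr 2
        rw [hMdef]; abel
      rw [this, hone, Matrix.mul_one, hMinv_eq]
      abel
    rw [h1M]
    have := psd_conj (psd_smul hP.le hGGt) S⁻¹
    rwa [herm_transpose hSiH] at this
  -- Step 3 : det (1 + H) = det (1 + K * Q)
  have step3 : (1 + H).det = (1 + K * Q).det := by
    have hH2 : H = (S⁻¹ * G) * (K * (Gᵀ * S⁻¹)) := by
      rw [hHdef]; simp only [Matrix.mul_assoc]
    rw [hH2, det_one_add_mul_comm]
    congr 1
    rw [hQdef, ← hMinv_eq]
    simp only [Matrix.mul_assoc]
  -- Step 4 : det (1 + K * Q) = det (1 + R * Q * R)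
  have step4 : (1 + K * Q).det = (1 + R * Q * R).det := by
    rw [show K * Q = R * (R * Q) by rw [← hRR]; simp only [Matrix.mul_assoc],
      det_one_add_mul_comm]
  -- push-through
  have hGM : Gᵀ * M = N * Gᵀ := by
    rw [hMdef, hNdef]
    simp only [Matrix.mul_add, Matrix.add_mul, Matrix.mul_one, Matrix.one_mul,
      Matrix.mul_smul, Matrix.smul_mul, Matrix.mul_assoc]
  have hGMinv : Gᵀ * M⁻¹ = N⁻¹ * Gᵀ := by
    calc Gᵀ * M⁻¹ = N⁻¹ * (N * Gᵀ) * M⁻¹ := by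
          rw [← Matrix.mul_assoc, nonsing_inv_mul _ hNdetU, Matrix.one_mul]
      _ = N⁻¹ * (Gᵀ * M) * M⁻¹ := by rw [hGM]
      _ = N⁻¹ * Gᵀ := by
          rw [Matrix.mul_assoc N⁻¹, Matrix.mul_assoc, mul_nonsing_inv _ hMdetU, Matrix.mul_one]
  have hPQ : P • Q = 1 - N⁻¹ := by
    rw [hQdef, hGMinv]
    have h1 : P • (N⁻¹ * Gᵀ * G) = N⁻¹ * (P • (Gᵀ * G)) := by
      rw [Matrix.mul_smul, Matrix.mul_assoc]
    rw [h1, show P • (Gᵀ * G) = N - 1 by rw [hNdef]; abel, Matrix.mul_sub,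
      nonsing_inv_mul _ hNdetU, Matrix.mul_one]
  have hQeq : Q = P⁻¹ • ((1 : Matrix m m ℝ) - N⁻¹) := by
    rw [← hPQ, smul_smul, inv_mul_cancel₀ hP.ne', one_smul]
  have hQb : P⁻¹ • (1 : Matrix m m ℝ) - Q = P⁻¹ • N⁻¹ := by
    rw [hQeq, smul_sub]; abel
  -- Step 5
  have hQpsd : Q.PosSemidef := by
    have := psd_conj hMinvPsd Gᵀ
    rwa [transpose_transpose] at this
  have hRQR : (R * Q * R).PosSemidef := by
    have := psd_conj hQpsd R
    rwa [herm_transpose hRpsd.1] at this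
  have hX2 : ((1 : Matrix m m ℝ) + R * Q * R).PosSemidef := Matrix.PosSemidef.one.add hRQR
  have hY2 : ((1 : Matrix m m ℝ) + P⁻¹ • K).PosDef :=
    Matrix.PosDef.one.add_posSemidef (psd_smul (inv_nonneg.mpr hP.le) hK)
  have step5 : (1 + R * Q * R).det ≤ ((1 : Matrix m m ℝ) + P⁻¹ • K).det := by
    refine det_le_det_of hX2 hY2 ?_
    have hRPR : R * (P⁻¹ • (1 : Matrix m m ℝ)) * R = P⁻¹ • K := by
      rw [Matrix.mul_smul, Matrix.mul_one, Matrix.smul_mul, hRR]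
    have hdiff : (1 : Matrix m m ℝ) + P⁻¹ • K - (1 + R * Q * R) = R * (P⁻¹ • N⁻¹) * R := by
      calc (1 : Matrix m m ℝ) + P⁻¹ • K - (1 + R * Q * R) = P⁻¹ • K - R * Q * R := by abel
        _ = R * (P⁻¹ • (1 : Matrix m m ℝ)) * R - R * Q * R := by rw [hRPR]
        _ = R * (P⁻¹ • (1 : Matrix m m ℝ) - Q) * R := by
            rw [Matrix.mul_sub, Matrix.sub_mul]
        _ = R * (P⁻¹ • N⁻¹) * R := by rw [hQb]
    rw [hdiff]
    have := psd_conj (psd_smul (inv_nonneg.mpr hP.le) hNpd.inv.posSemidef) R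
    rwa [herm_transpose hRpsd.1] at this
  -- Step 6
  have htr : ((1 : Matrix m m ℝ) + P⁻¹ • K).trace ≤ 2 * (Fintype.card m) := by
    rw [trace_add, trace_smul, trace_one]
    have htrK : K.trace ≤ (Fintype.card m) * P := by
      rw [Matrix.trace]
      calc ∑ i, K.diag i ≤ ∑ _i : m, P := Finset.sum_le_sum fun i _ => hdiag i
        _ = (Fintype.card m) * P := by rw [Finset.sum_const, Finset.card_univ, nsmul_eq_mul]
    have : P⁻¹ • K.trace ≤ (Fintype.card m : ℝ) := by
      rw [smul_eq_mul]
      calc P⁻¹ * K.trace ≤ P⁻¹ * ((Fintype.card m) * P) :=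
            mul_le_mul_of_nonneg_left htrK (by positivity)
        _ = (Fintype.card m : ℝ) := by field_simp
    linarith
  have step6 : ((1 : Matrix m m ℝ) + P⁻¹ • K).det ≤ 2 ^ (Fintype.card m) :=
    det_le_two_pow hY2.posSemidef htr
  -- combine
  calc (1 + G * K * Gᵀ).det = M.det * (M⁻¹ + H).det := d1
    _ ≤ M.det * (1 + H).det := mul_le_mul_of_nonneg_left step2 hMpd.det_pos.le
    _ = M.det * (1 + K * Q).det := by rw [step3]
    _ = M.det * (1 + R * Q * R).det := by rw [step4]
    _ ≤ M.det * ((1 : Matrix m m ℝ) + P⁻¹ • K).det :=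
        mul_le_mul_of_nonneg_left step5 hMpd.det_pos.le
    _ ≤ M.det * 2 ^ (Fintype.card m) := mul_le_mul_of_nonneg_left step6 hMpd.det_pos.le

/-- for an `N×N` PSD matrix `K` with diagonal entries `≤ P`, a subset `S`, and any
real matrix `G` with columns indexed by `S`,
`½ log₂ det(I + G K(S) Gᵀ) ≤ ½ log₂ det(I + P G Gᵀ) + |S|/2`. -/
theorem stmt2 (N : ℕ) (P : ℝ) (hP : 0 < P)
    (K : Matrix (Fin N) (Fin N) ℝ) (hK : K.PosSemidef) (hdiag : ∀ j, K j j ≤ P)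
    (S : Finset (Fin N)) {ι : Type*} [Fintype ι] [DecidableEq ι]
    (G : Matrix ι {j : Fin N // j ∈ S} ℝ) :
    (1 / 2) * Real.logb 2
        ((1 + G * K.submatrix (fun j : {j : Fin N // j ∈ S} => (j : Fin N))
            (fun j : {j : Fin N // j ∈ S} => (j : Fin N)) * G.transpose).det)
      ≤ (1 / 2) * Real.logb 2 ((1 + P • (G * G.transpose)).det) + (S.card : ℝ) / 2 := by
  classical
  set K' := K.submatrix (fun j : {j : Fin N // j ∈ S} => (j : Fin N))
      (fun j : {j : Fin N // j ∈ S} => (j : Fin N)) with hK'def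
  have hK' : K'.PosSemidef := hK.submatrix _
  have hdiag' : ∀ j, K' j j ≤ P := fun j => hdiag j
  have hkey := key_det hP hK' hdiag' G
  have hd1 : (0:ℝ) < (1 + G * K' * Gᵀ).det :=
    (Matrix.PosDef.one.add_posSemidef (psd_conj hK' G)).det_pos
  have hGGt : (G * Gᵀ).PosSemidef := by
    have := Matrix.posSemidef_self_mul_conjTranspose G
    rwa [conjTranspose_eq_transpose_of_trivial] at this
  have hd2 : (0:ℝ) < (1 + P • (G * Gᵀ)).det :=
    (Matrix.PosDef.one.add_posSemidef (psd_smul hP.le hGGt)).det_pos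
  set c := Fintype.card {j : Fin N // j ∈ S} with hc
  have hcard : (c : ℝ) = (S.card : ℝ) := by rw [hc, Fintype.card_coe]
  have hlog : Real.logb 2 ((1 + G * K' * Gᵀ).det)
      ≤ Real.logb 2 ((1 + P • (G * Gᵀ)).det) + c := by
    calc Real.logb 2 ((1 + G * K' * Gᵀ).det)
        ≤ Real.logb 2 ((1 + P • (G * Gᵀ)).det * 2 ^ c) :=
          Real.logb_le_logb_of_le (by norm_num) hd1 hkey
      _ = Real.logb 2 ((1 + P • (G * Gᵀ)).det) + c := by
          rw [Real.logb_mul hd2.ne' (by positivity), Real.logb_pow,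
            Real.logb_self_eq_one (by norm_num), mul_one]
  linarith
end

section
/- For any real matrix $G$ and positive semidefinite matrix $K$ of compatible dimensions and any $P>0$ with $K$ having all diagonal entries at most $P$, the bound $\log\det(I + G K G^T) \le \log\det(I + P\, G G^T) + \log\det(I + \tfrac{1}{P}K)$ holds. -/
open Matrix
open scoped MatrixOrder

section Helpers

variable {k : ℕ}

/-- `det (1 + M) ≥ 1` for `M` PSD, via the spectral theorem. -/
lemma one_le_det_one_add {M : Matrix (Fin k) (Fin k) ℝ} (hM : M.PosSemidef) :
    1 ≤ (1 + M).det := by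
  have hH := hM.isHermitian
  set U : Matrix (Fin k) (Fin k) ℝ := (hH.eigenvectorUnitary : Matrix (Fin k) (Fin k) ℝ)
  have hUU : U * star U = 1 := Matrix.mem_unitaryGroup_iff.mp hH.eigenvectorUnitary.2
  have hUU2 : star U * U = 1 := Matrix.mem_unitaryGroup_iff'.mp hH.eigenvectorUnitary.2
  have hdecomp : 1 + M = U * (1 + diagonal (RCLike.ofReal ∘ hH.eigenvalues)) * star U := by
    rw [Matrix.mul_add, Matrix.add_mul, Matrix.mul_one, hUU]
    conv_lhs => rw [hH.spectral_theorem, Unitary.conjStarAlgAut_apply]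
  rw [hdecomp, Matrix.det_mul, Matrix.det_mul, mul_comm, ← mul_assoc, ← Matrix.det_mul, hUU2,
    Matrix.det_one, one_mul]
  have : (1 : Matrix (Fin k) (Fin k) ℝ) + diagonal (RCLike.ofReal ∘ hH.eigenvalues)
      = diagonal (fun i => 1 + hH.eigenvalues i) := by
    rw [← Matrix.diagonal_one, Matrix.diagonal_add]
    rfl
  rw [this, Matrix.det_diagonal]
  calc (1:ℝ) = ∏ _i : Fin k, 1 := by simp
    _ ≤ ∏ i, (1 + hH.eigenvalues i) := by
        refine Finset.prod_le_prod (fun i _ => by norm_num) (fun i _ => ?_)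
        have := hM.eigenvalues_nonneg i
        linarith

/-- adding a PSD matrix can only increase `det (1 + ·)`. -/
lemma det_one_add_le_det_one_add_add {S T : Matrix (Fin k) (Fin k) ℝ}
    (hS : S.PosSemidef) (hT : T.PosSemidef) :
    (1 + T).det ≤ (1 + S + T).det := by
  have h1T : (1 + T).PosDef := Matrix.PosDef.one.add_posSemidef hT
  have h1Tsd : (1 + T).PosSemidef := h1T.posSemidef
  set r := CFC.sqrt (1 + T) with hr
  have hrr : r * r = 1 + T := CFC.sqrt_mul_sqrt_self _ h1Tsd.nonneg
  have hrsd : r.PosSemidef := Matrix.LE.le.posSemidef (CFC.sqrt_nonneg _)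
  have hrH : rᴴ = r := hrsd.isHermitian
  have hdet : r.det * r.det = (1 + T).det := by rw [← Matrix.det_mul, hrr]
  have hdpos : 0 < (1 + T).det := h1T.det_pos
  have hrdet : IsUnit r.det := by
    have : r.det ≠ 0 := by
      intro h; rw [h, mul_zero] at hdet; exact hdpos.ne (hdet)
    exact isUnit_iff_ne_zero.mpr this
  have hinvH : (r⁻¹)ᴴ = r⁻¹ := by rw [Matrix.conjTranspose_nonsing_inv, hrH]
  have hX : (r⁻¹ * S * r⁻¹).PosSemidef := by
    have := hS.conjTranspose_mul_mul_same r⁻¹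
    rwa [hinvH] at this
  have key : 1 + S + T = r * (1 + r⁻¹ * S * r⁻¹) * r := by
    rw [Matrix.mul_add, Matrix.add_mul, Matrix.mul_one, hrr]
    have : r * (r⁻¹ * S * r⁻¹) * r = (r * r⁻¹) * S * (r⁻¹ * r) := by
      simp only [Matrix.mul_assoc]
    rw [this, Matrix.mul_nonsing_inv _ hrdet, Matrix.nonsing_inv_mul _ hrdet,
      Matrix.one_mul, Matrix.mul_one]
    abel
  rw [key, Matrix.det_mul, Matrix.det_mul]
  calc (1 + T).det = (1 + T).det * 1 := (mul_one _).symm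
    _ ≤ (1 + T).det * (1 + r⁻¹ * S * r⁻¹).det :=
        mul_le_mul_of_nonneg_left (one_le_det_one_add hX) hdpos.le
    _ = r.det * (1 + r⁻¹ * S * r⁻¹).det * r.det := by rw [← hdet]; ring

/-- Key determinant inequality: `det (1 + cᴴ M c) ≤ det (1 + M) * det (1 + c cᴴ)`. -/
lemma det_one_add_conj_le {M c : Matrix (Fin k) (Fin k) ℝ} (hM : M.PosSemidef) :
    (1 + cᴴ * M * c).det ≤ (1 + M).det * (1 + c * cᴴ).det := by
  have h1M : (1 + M).PosDef := Matrix.PosDef.one.add_posSemidef hM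
  have h1Msd : (1 + M).PosSemidef := h1M.posSemidef
  set r := CFC.sqrt (1 + M) with hrdef
  have hrr : r * r = 1 + M := CFC.sqrt_mul_sqrt_self _ h1Msd.nonneg
  have hrsd : r.PosSemidef := Matrix.LE.le.posSemidef (CFC.sqrt_nonneg _)
  have hrH : rᴴ = r := hrsd.isHermitian
  have h1 : (1 + M).det * (1 + c * cᴴ).det = (1 + M + (r * c) * (r * c)ᴴ).det := by
    have : r * (1 + c * cᴴ) * r = 1 + M + (r * c) * (r * c)ᴴ := by
      rw [Matrix.mul_add, Matrix.add_mul, Matrix.mul_one, hrr,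
        Matrix.conjTranspose_mul, hrH]
      simp only [Matrix.mul_assoc]
    rw [← this, Matrix.det_mul, Matrix.det_mul]
    have hdet : r.det * r.det = (1 + M).det := by rw [← Matrix.det_mul, hrr]
    rw [← hdet]; ring
  have h2 : (1 + (r * c) * (r * c)ᴴ).det ≤ (1 + M + (r * c) * (r * c)ᴴ).det :=
    det_one_add_le_det_one_add_add hM (Matrix.posSemidef_self_mul_conjTranspose _)
  have h3 : (1 + (r * c) * (r * c)ᴴ).det = (1 + (cᴴ * c + cᴴ * M * c)).det := by
    rw [Matrix.det_one_add_mul_comm]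
    congr 1
    rw [Matrix.conjTranspose_mul, hrH]
    have : cᴴ * r * (r * c) = cᴴ * (r * r) * c := by simp only [Matrix.mul_assoc]
    rw [this, hrr, Matrix.mul_add, Matrix.add_mul, Matrix.mul_one]
  have h4 : (1 + cᴴ * M * c).det ≤ (1 + (cᴴ * c + cᴴ * M * c)).det := by
    have := det_one_add_le_det_one_add_add
      (Matrix.posSemidef_conjTranspose_mul_self c) (hM.conjTranspose_mul_mul_same c)
    rwa [add_assoc] at this
  calc (1 + cᴴ * M * c).det ≤ (1 + (cᴴ * c + cᴴ * M * c)).det := h4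
    _ = (1 + (r * c) * (r * c)ᴴ).det := h3.symm
    _ ≤ (1 + M + (r * c) * (r * c)ᴴ).det := h2
    _ = (1 + M).det * (1 + c * cᴴ).det := h1.symm

end Helpers

/-- `log det(I + G K Gᵀ) ≤ log det(I + P G Gᵀ) + log det(I + P⁻¹ K)` for
`K` PSD with diagonal entries at most `P > 0`. -/
theorem stmt3 (n m : ℕ) (P : ℝ) (hP : 0 < P)
    (G : Matrix (Fin n) (Fin m) ℝ) (K : Matrix (Fin m) (Fin m) ℝ)
    (hK : K.PosSemidef) (hdiag : ∀ j, K j j ≤ P) :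
    Real.log ((1 + G * K * G.transpose).det)
      ≤ Real.log ((1 + P • (G * G.transpose)).det) + Real.log ((1 + P⁻¹ • K).det) := by
  obtain ⟨C, hC⟩ := CStarAlgebra.nonneg_iff_eq_star_mul_self.mp hK.nonneg
  rw [Matrix.star_eq_conjTranspose] at hC
  have htr : G.transpose = Gᴴ := (Matrix.conjTranspose_eq_transpose_of_trivial G).symm
  rw [htr]
  set s := Real.sqrt P with hs
  have hs0 : 0 < s := Real.sqrt_pos.mpr hP
  have hss : s * s = P := Real.mul_self_sqrt hP.le
  set g : Matrix (Fin m) (Fin n) ℝ := s • Gᴴ with hg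
  set c : Matrix (Fin m) (Fin m) ℝ := s⁻¹ • Cᴴ with hc
  have hgH : gᴴ = s • G := by
    rw [hg, Matrix.conjTranspose_smul, Matrix.conjTranspose_conjTranspose, star_trivial]
  have hcH : cᴴ = s⁻¹ • C := by
    rw [hc, Matrix.conjTranspose_smul, Matrix.conjTranspose_conjTranspose, star_trivial]
  have hPGG : P • (G * Gᴴ) = gᴴ * g := by
    rw [hgH, hg, Matrix.smul_mul, Matrix.mul_smul, smul_smul, hss]
  have hPK : P⁻¹ • K = c * cᴴ := by
    rw [hcH, hc, Matrix.smul_mul, Matrix.mul_smul, smul_smul, ← hC]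
    congr 1
    rw [← mul_inv, hss]
  have hGK : G * K * Gᴴ = (gᴴ * c) * (cᴴ * g) := by
    have h1 : gᴴ * c = G * Cᴴ := by
      rw [hgH, hc, Matrix.smul_mul, Matrix.mul_smul, smul_smul,
        mul_inv_cancel₀ hs0.ne', one_smul]
    have h2 : cᴴ * g = C * Gᴴ := by
      rw [hcH, hg, Matrix.smul_mul, Matrix.mul_smul, smul_smul,
        inv_mul_cancel₀ hs0.ne', one_smul]
    rw [h1, h2, hC]
    simp only [Matrix.mul_assoc]
  -- positivity of the three determinants
  have hMpsd : (g * gᴴ).PosSemidef := Matrix.posSemidef_self_mul_conjTranspose g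
  have hL : (1 + G * K * Gᴴ).PosDef := by
    have : (G * K * Gᴴ).PosSemidef := hK.mul_mul_conjTranspose_same G
    exact Matrix.PosDef.one.add_posSemidef this
  have hA : (1 + P • (G * Gᴴ)).PosDef := by
    rw [hPGG]
    exact Matrix.PosDef.one.add_posSemidef (Matrix.posSemidef_conjTranspose_mul_self g)
  have hB : (1 + P⁻¹ • K).PosDef := by
    rw [hPK]
    exact Matrix.PosDef.one.add_posSemidef (Matrix.posSemidef_self_mul_conjTranspose c)
  -- the determinant inequality
  have hdet : (1 + G * K * Gᴴ).det ≤ (1 + P • (G * Gᴴ)).det * (1 + P⁻¹ • K).det := by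
    have e1 : (1 + G * K * Gᴴ).det = (1 + cᴴ * (g * gᴴ) * c).det := by
      rw [hGK, Matrix.det_one_add_mul_comm]
      congr 1
      simp only [Matrix.mul_assoc]
    have e2 : (1 + P • (G * Gᴴ)).det = (1 + g * gᴴ).det := by
      rw [hPGG, Matrix.det_one_add_mul_comm]
    rw [e1, e2, hPK]
    exact det_one_add_conj_le hMpsd
  rw [← Real.log_mul hA.det_pos.ne' hB.det_pos.ne']
  exact Real.log_le_log hL.det_pos hdet
end

section
/- Under the symmetry assumptions of the previous covering setup, and the additional condition $p_3([2:N]) = p_1^2$, the variance satisfies $\mathrm{Var}(\mathcal{A}) \le T L\, p_1 + \sum_{\emptyset \ne \hat{\mathcal{S}} \subseteq [2:N]} T L \cdot L(\hat{\mathcal{S}})\, p_2(\hat{\mathcal{S}}) + \sum_{\hat{\mathcal{S}} \subsetneq [2:N]} T^2 L \cdot L(\hat{\mathcal{S}})\, p_3(\hat{\mathcal{S}})$, where $\mathcal{A} = \sum_{t,\mathbf{l}} E(t,\mathbf{l})$. -/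
open MeasureTheory ProbabilityTheory Finset

lemma fiber_card_le {κ : Type*} [Fintype κ] [DecidableEq κ] (L : κ → ℕ) (l : κ → ℕ)
    (S : Finset κ) (s : Finset (κ → ℕ))
    (hs : s ⊆ Fintype.piFinset fun k => Finset.Icc 1 (L k)) :
    (((s.filter fun l' => Finset.univ.filter (fun k => l k ≠ l' k) = S).card : ℝ))
      ≤ ∏ k ∈ S, (L k : ℝ) := by
  have h1 : (s.filter fun l' => Finset.univ.filter (fun k => l k ≠ l' k) = S)
      ⊆ Fintype.piFinset fun k => if k ∈ S then Finset.Icc 1 (L k) else {l k} := by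
    intro l' hl'
    rw [Finset.mem_filter] at hl'
    obtain ⟨hmem, hS⟩ := hl'
    have hmem' := hs hmem
    rw [Fintype.mem_piFinset] at hmem' ⊢
    intro k
    by_cases hk : k ∈ S
    · simp only [if_pos hk]; exact hmem' k
    · have hne : ¬ (l k ≠ l' k) := by
        rw [← hS, Finset.mem_filter] at hk; push_neg at hk
        intro h; exact absurd (hk (Finset.mem_univ k)) (by simpa using h)
      push_neg at hne
      simp [if_neg hk, hne.symm]
  have h2 : (Fintype.piFinset fun k =>
      if k ∈ S then Finset.Icc 1 (L k) else ({l k} : Finset ℕ)).card = ∏ k ∈ S, L k := by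
    rw [Fintype.card_piFinset]
    simp only [apply_ite Finset.card, Nat.card_Icc, Finset.card_singleton, Nat.add_sub_cancel]
    rw [Finset.prod_ite_mem, Finset.univ_inter]
  calc (((s.filter fun l' => Finset.univ.filter (fun k => l k ≠ l' k) = S).card : ℝ))
      ≤ ((Fintype.piFinset fun k =>
          if k ∈ S then Finset.Icc 1 (L k) else ({l k} : Finset ℕ)).card : ℝ) := by
        exact_mod_cast Finset.card_le_card h1
    _ = ∏ k ∈ S, (L k : ℝ) := by rw [h2]; push_cast; rfl

/-- variance bound for the covering lemma. Under the same symmetry assumptions as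
the second-moment bound, together with `p₃([2:N]) = p₁²` (independence of fully distinct
codewords), `Var(A) ≤ T·L·p₁ + ∑_{Sh≠∅} T·L·L(Sh)·p₂(Sh) + ∑_{Sh⊊univ} T²·L·L(Sh)·p₃(Sh)`. -/
theorem stmt9 {Ω κ : Type*} [MeasurableSpace Ω] [Fintype κ] [DecidableEq κ]
    (μ : Measure Ω) [IsProbabilityMeasure μ]
    (T : ℕ) (L : κ → ℕ) (hT : 2 ≤ T) (hL : ∀ k, 2 ≤ L k)
    (E : ℕ → (κ → ℕ) → Set Ω) (hE : ∀ t l, MeasurableSet (E t l)) :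
    let one : κ → ℕ := fun _ => 1
    let two : Finset κ → κ → ℕ := fun Sh k => if k ∈ Sh then 2 else 1
    let Lset : Finset (κ → ℕ) := Fintype.piFinset fun k => Finset.Icc 1 (L k)
    let p1 : ℝ := (μ (E 1 one)).toReal
    let p2 : Finset κ → ℝ := fun Sh => (μ (E 1 one ∩ E 1 (two Sh))).toReal
    let p3 : Finset κ → ℝ := fun Sh => (μ (E 1 one ∩ E 2 (two Sh))).toReal
    let A : Ω → ℝ := fun ω => ∑ t ∈ Finset.Icc 1 T, ∑ l ∈ Lset,
      Set.indicator (E t l) (fun _ => (1 : ℝ)) ω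
    -- symmetry assumptions
    (∀ t ∈ Finset.Icc 1 T, ∀ l ∈ Lset, μ (E t l) = μ (E 1 one)) →
    (∀ t ∈ Finset.Icc 1 T, ∀ l ∈ Lset, ∀ l' ∈ Lset, l ≠ l' →
      μ (E t l ∩ E t l')
        = μ (E 1 one ∩ E 1 (two (Finset.univ.filter fun k => l k ≠ l' k)))) →
    (∀ t ∈ Finset.Icc 1 T, ∀ t' ∈ Finset.Icc 1 T, t ≠ t' → ∀ l ∈ Lset, ∀ l' ∈ Lset,
      μ (E t l ∩ E t' l')
        = μ (E 1 one ∩ E 2 (two (Finset.univ.filter fun k => l k ≠ l' k)))) →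
    -- independence of fully distinct codewords
    p3 Finset.univ = p1 ^ 2 →
    variance A μ
      ≤ (T : ℝ) * (∏ k, (L k : ℝ)) * p1
        + ∑ Sh ∈ (Finset.univ : Finset (Finset κ)).filter (· ≠ ∅),
            (T : ℝ) * (∏ k, (L k : ℝ)) * (∏ k ∈ Sh, (L k : ℝ)) * p2 Sh
        + ∑ Sh ∈ (Finset.univ : Finset (Finset κ)).filter (· ≠ Finset.univ),
            (T : ℝ) ^ 2 * (∏ k, (L k : ℝ)) * (∏ k ∈ Sh, (L k : ℝ)) * p3 Sh := by
  intro one two Lset p1 p2 p3 A h1 h2 h3 hp3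
  classical
  have hLsub : Lset ⊆ Fintype.piFinset fun k => Finset.Icc 1 (L k) := Finset.Subset.refl _
  set LR : ℝ := ∏ k, (L k : ℝ) with hLR
  set B : ℝ := ∑ S ∈ (Finset.univ : Finset (Finset κ)).filter (· ≠ ∅),
      (∏ k ∈ S, (L k : ℝ)) * p2 S with hBdef
  set C : ℝ := ∑ S ∈ (Finset.univ : Finset (Finset κ)).filter (· ≠ Finset.univ),
      (∏ k ∈ S, (L k : ℝ)) * p3 S with hCdef
  -- nonnegativity
  have hp1nn : 0 ≤ p1 := ENNReal.toReal_nonneg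
  have hp2nn : ∀ S, 0 ≤ p2 S := fun S => ENNReal.toReal_nonneg
  have hp3nn : ∀ S, 0 ≤ p3 S := fun S => ENNReal.toReal_nonneg
  have hLSnn : ∀ S : Finset κ, 0 ≤ ∏ k ∈ S, (L k : ℝ) :=
    fun S => Finset.prod_nonneg fun k _ => by positivity
  have hLRnn : 0 ≤ LR := by rw [hLR]; exact Finset.prod_nonneg fun k _ => by positivity
  have hCnn : 0 ≤ C := Finset.sum_nonneg fun S _ => mul_nonneg (hLSnn S) (hp3nn S)
  have hTnn : (0:ℝ) ≤ (T:ℝ) := Nat.cast_nonneg T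
  -- cardinalities
  have hTcard : (Finset.Icc 1 T).card = T := by simp [Nat.card_Icc]
  have hLcard : (Lset.card : ℝ) = LR := by
    rw [show Lset.card = ∏ k, (Finset.Icc 1 (L k)).card from Fintype.card_piFinset _]
    rw [hLR]; push_cast [Nat.card_Icc]; rfl
  -- integrability and indicator facts
  have hint : ∀ t l, Integrable (Set.indicator (E t l) fun _ => (1:ℝ)) μ :=
    fun t l => (integrable_const 1).indicator (hE t l)
  have hmul : ∀ t l t' l' (ω : Ω),
      Set.indicator (E t l) (fun _ => (1:ℝ)) ω * Set.indicator (E t' l') (fun _ => (1:ℝ)) ω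
        = Set.indicator (E t l ∩ E t' l') (fun _ => (1:ℝ)) ω := by
    intro t l t' l' ω
    by_cases ha : ω ∈ E t l <;> by_cases hb : ω ∈ E t' l' <;>
      simp [Set.indicator_apply, ha, hb, Set.mem_inter_iff]
  have hIind : ∀ (s : Set Ω), MeasurableSet s →
      ∫ ω, Set.indicator s (fun _ => (1:ℝ)) ω ∂μ = (μ s).toReal := by
    intro s hs; rw [integral_indicator_const (1:ℝ) hs]; simp [Measure.real]
  have hMem : MemLp A 2 μ :=
    memLp_finset_sum _ fun t _ => memLp_finset_sum _ fun l _ =>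
      memLp_indicator_const 2 (hE t l) 1 (Or.inr (measure_ne_top μ _))
  -- mean
  have hmean : ∫ ω, A ω ∂μ = (T:ℝ) * LR * p1 := by
    show (∫ ω, ∑ t ∈ Finset.Icc 1 T, ∑ l ∈ Lset,
        Set.indicator (E t l) (fun _ => (1:ℝ)) ω ∂μ) = _
    rw [integral_finset_sum _ fun t _ => integrable_finset_sum _ fun l _ => hint t l]
    have heq : ∑ t ∈ Finset.Icc 1 T, ∫ ω, ∑ l ∈ Lset,
        Set.indicator (E t l) (fun _ => (1:ℝ)) ω ∂μ
        = ∑ t ∈ Finset.Icc 1 T, ∑ l ∈ Lset, p1 := by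
      refine Finset.sum_congr rfl fun t ht => ?_
      rw [integral_finset_sum _ fun l _ => hint t l]
      refine Finset.sum_congr rfl fun l hl => ?_
      rw [hIind _ (hE t l), h1 t ht l hl]
    rw [heq, Finset.sum_const, Finset.sum_const, hTcard, nsmul_eq_mul, nsmul_eq_mul, hLcard]
    ring
  -- second moment
  have hsq : ∫ ω, A ω ^ 2 ∂μ
      = ∑ t ∈ Finset.Icc 1 T, ∑ t' ∈ Finset.Icc 1 T, ∑ l ∈ Lset, ∑ l' ∈ Lset,
          (μ (E t l ∩ E t' l')).toReal := by
    have hA2 : ∀ ω, A ω ^ 2 = ∑ t ∈ Finset.Icc 1 T, ∑ t' ∈ Finset.Icc 1 T,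
        ∑ l ∈ Lset, ∑ l' ∈ Lset,
          Set.indicator (E t l ∩ E t' l') (fun _ => (1:ℝ)) ω := by
      intro ω
      show (∑ t ∈ Finset.Icc 1 T, ∑ l ∈ Lset,
          Set.indicator (E t l) (fun _ => (1:ℝ)) ω) ^ 2 = _
      rw [sq, Finset.sum_mul_sum]
      refine Finset.sum_congr rfl fun t _ => Finset.sum_congr rfl fun t' _ => ?_
      rw [Finset.sum_mul_sum]
      exact Finset.sum_congr rfl fun l _ => Finset.sum_congr rfl fun l' _ =>
        hmul t l t' l' ω
    simp only [hA2]
    rw [integral_finset_sum _ fun t _ => integrable_finset_sum _ fun t' _ =>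
      integrable_finset_sum _ fun l _ => integrable_finset_sum _ fun l' _ =>
        (integrable_const 1).indicator ((hE t l).inter (hE t' l'))]
    refine Finset.sum_congr rfl fun t _ => ?_
    rw [integral_finset_sum _ fun t' _ => integrable_finset_sum _ fun l _ =>
      integrable_finset_sum _ fun l' _ =>
        (integrable_const 1).indicator ((hE t l).inter (hE t' l'))]
    refine Finset.sum_congr rfl fun t' _ => ?_
    rw [integral_finset_sum _ fun l _ => integrable_finset_sum _ fun l' _ =>
      (integrable_const 1).indicator ((hE t l).inter (hE t' l'))]
    refine Finset.sum_congr rfl fun l _ => ?_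
    rw [integral_finset_sum _ fun l' _ =>
      (integrable_const 1).indicator ((hE t l).inter (hE t' l'))]
    exact Finset.sum_congr rfl fun l' _ => hIind _ ((hE t l).inter (hE t' l'))
  have hvar : variance A μ
      = (∑ t ∈ Finset.Icc 1 T, ∑ t' ∈ Finset.Icc 1 T, ∑ l ∈ Lset, ∑ l' ∈ Lset,
          (μ (E t l ∩ E t' l')).toReal) - ((T:ℝ) * LR * p1) ^ 2 := by
    rw [variance_eq_sub hMem]
    rw [show (∫ ω, (A ^ 2) ω ∂μ) = ∫ ω, A ω ^ 2 ∂μ from rfl, hsq,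
      show (∫ ω, A ω ∂μ) = (T:ℝ) * LR * p1 from hmean]
  -- per (t,l) bound for same-t, different-l part
  have hB : ∀ t ∈ Finset.Icc 1 T, ∀ l ∈ Lset,
      ∑ l' ∈ Lset.erase l, (μ (E t l ∩ E t l')).toReal ≤ B := by
    intro t ht l hl
    have heq : ∑ l' ∈ Lset.erase l, (μ (E t l ∩ E t l')).toReal
        = ∑ l' ∈ Lset.erase l, p2 (Finset.univ.filter fun k => l k ≠ l' k) := by
      refine Finset.sum_congr rfl fun l' hl' => ?_
      obtain ⟨hne, hl'mem⟩ := Finset.mem_erase.mp hl'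
      rw [h2 t ht l hl l' hl'mem (Ne.symm hne)]
    rw [heq, ← Finset.sum_fiberwise' (Lset.erase l)
      (fun l' => Finset.univ.filter fun k => l k ≠ l' k) p2]
    have hzero : ∀ S ∈ (Finset.univ : Finset (Finset κ)),
        (∑ l' ∈ (Lset.erase l).filter
          (fun l' => (Finset.univ.filter fun k => l k ≠ l' k) = S), p2 S) ≠ 0 →
        S ≠ ∅ := by
      intro S _ hS0 hSe
      apply hS0
      refine Finset.sum_eq_zero fun l' hl' => ?_
      exfalso
      rw [Finset.mem_filter] at hl'
      obtain ⟨hl'e, hfe⟩ := hl'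
      have hll' : l = l' := by
        funext k
        by_contra hk
        have : k ∈ (Finset.univ.filter fun k => l k ≠ l' k) :=
          Finset.mem_filter.mpr ⟨Finset.mem_univ k, hk⟩
        rw [hfe, hSe] at this
        exact absurd this (Finset.notMem_empty k)
      exact (Finset.mem_erase.mp hl'e).1 hll'.symm
    rw [← Finset.sum_filter_of_ne hzero]
    refine Finset.sum_le_sum fun S hS => ?_
    rw [Finset.sum_const, nsmul_eq_mul]
    exact mul_le_mul_of_nonneg_right
      (fiber_card_le L l S (Lset.erase l) ((Finset.erase_subset _ _).trans hLsub))
      (hp2nn S)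
  -- diagonal-in-t bound
  have hstep1 : ∀ t ∈ Finset.Icc 1 T,
      ∑ l ∈ Lset, ∑ l' ∈ Lset, (μ (E t l ∩ E t l')).toReal ≤ LR * p1 + LR * B := by
    intro t ht
    have hsplitl : ∀ l ∈ Lset, ∑ l' ∈ Lset, (μ (E t l ∩ E t l')).toReal
        = (μ (E t l)).toReal + ∑ l' ∈ Lset.erase l, (μ (E t l ∩ E t l')).toReal := by
      intro l hl
      rw [← Finset.add_sum_erase _ _ hl, Set.inter_self]
    calc ∑ l ∈ Lset, ∑ l' ∈ Lset, (μ (E t l ∩ E t l')).toReal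
        = ∑ l ∈ Lset, ((μ (E t l)).toReal
            + ∑ l' ∈ Lset.erase l, (μ (E t l ∩ E t l')).toReal) :=
          Finset.sum_congr rfl hsplitl
      _ ≤ ∑ l ∈ Lset, (p1 + B) := Finset.sum_le_sum fun l hl =>
          add_le_add (le_of_eq (by rw [h1 t ht l hl])) (hB t ht l hl)
      _ = LR * p1 + LR * B := by
          rw [Finset.sum_const, nsmul_eq_mul, hLcard]; ring
  -- off-diagonal-in-t bound
  have hC : ∀ t ∈ Finset.Icc 1 T, ∀ t' ∈ Finset.Icc 1 T, t ≠ t' →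
      ∑ l ∈ Lset, ∑ l' ∈ Lset, (μ (E t l ∩ E t' l')).toReal
        ≤ LR * (LR * p1 ^ 2 + C) := by
    intro t ht t' ht' htne
    have hinner : ∀ l ∈ Lset,
        ∑ l' ∈ Lset, (μ (E t l ∩ E t' l')).toReal ≤ LR * p1 ^ 2 + C := by
      intro l hl
      have heq : ∑ l' ∈ Lset, (μ (E t l ∩ E t' l')).toReal
          = ∑ l' ∈ Lset, p3 (Finset.univ.filter fun k => l k ≠ l' k) := by
        refine Finset.sum_congr rfl fun l' hl' => ?_
        rw [h3 t ht t' ht' htne l hl l' hl']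
      rw [heq, ← Finset.sum_fiberwise' Lset
        (fun l' => Finset.univ.filter fun k => l k ≠ l' k) p3]
      calc ∑ S : Finset κ, ∑ l' ∈ Lset.filter
            (fun l' => (Finset.univ.filter fun k => l k ≠ l' k) = S), p3 S
          ≤ ∑ S : Finset κ, (∏ k ∈ S, (L k : ℝ)) * p3 S := by
            refine Finset.sum_le_sum fun S _ => ?_
            rw [Finset.sum_const, nsmul_eq_mul]
            exact mul_le_mul_of_nonneg_right (fiber_card_le L l S Lset hLsub) (hp3nn S)
        _ = (∏ k ∈ Finset.univ, (L k : ℝ)) * p3 Finset.univ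
            + ∑ S ∈ (Finset.univ : Finset (Finset κ)).erase Finset.univ,
                (∏ k ∈ S, (L k : ℝ)) * p3 S :=
            (Finset.add_sum_erase _ _ (Finset.mem_univ _)).symm
        _ = LR * p1 ^ 2 + C := by
            rw [hp3, ← Finset.filter_ne']
    calc ∑ l ∈ Lset, ∑ l' ∈ Lset, (μ (E t l ∩ E t' l')).toReal
        ≤ ∑ l ∈ Lset, (LR * p1 ^ 2 + C) := Finset.sum_le_sum hinner
      _ = LR * (LR * p1 ^ 2 + C) := by rw [Finset.sum_const, nsmul_eq_mul, hLcard]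
  -- assemble the total bound
  have hKnn : 0 ≤ LR * (LR * p1 ^ 2 + C) :=
    mul_nonneg hLRnn (add_nonneg (mul_nonneg hLRnn (sq_nonneg _)) hCnn)
  have hTot_le : (∑ t ∈ Finset.Icc 1 T, ∑ t' ∈ Finset.Icc 1 T, ∑ l ∈ Lset, ∑ l' ∈ Lset,
      (μ (E t l ∩ E t' l')).toReal)
      ≤ (T:ℝ) * (LR * p1 + LR * B) + (T:ℝ) * ((T:ℝ) * (LR * (LR * p1 ^ 2 + C))) := by
    have hsplit : (∑ t ∈ Finset.Icc 1 T, ∑ t' ∈ Finset.Icc 1 T, ∑ l ∈ Lset, ∑ l' ∈ Lset,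
        (μ (E t l ∩ E t' l')).toReal)
        = (∑ t ∈ Finset.Icc 1 T, ∑ l ∈ Lset, ∑ l' ∈ Lset, (μ (E t l ∩ E t l')).toReal)
          + ∑ t ∈ Finset.Icc 1 T, ∑ t' ∈ (Finset.Icc 1 T).erase t,
              ∑ l ∈ Lset, ∑ l' ∈ Lset, (μ (E t l ∩ E t' l')).toReal := by
      rw [← Finset.sum_add_distrib]
      exact Finset.sum_congr rfl fun t ht => (Finset.add_sum_erase _ _ ht).symm
    rw [hsplit]
    have hA1 : (∑ t ∈ Finset.Icc 1 T, ∑ l ∈ Lset, ∑ l' ∈ Lset,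
        (μ (E t l ∩ E t l')).toReal) ≤ (T:ℝ) * (LR * p1 + LR * B) := by
      calc (∑ t ∈ Finset.Icc 1 T, ∑ l ∈ Lset, ∑ l' ∈ Lset, (μ (E t l ∩ E t l')).toReal)
          ≤ ∑ t ∈ Finset.Icc 1 T, (LR * p1 + LR * B) := Finset.sum_le_sum hstep1
        _ = (T:ℝ) * (LR * p1 + LR * B) := by
            rw [Finset.sum_const, hTcard, nsmul_eq_mul]
    have hA2 : (∑ t ∈ Finset.Icc 1 T, ∑ t' ∈ (Finset.Icc 1 T).erase t,
        ∑ l ∈ Lset, ∑ l' ∈ Lset, (μ (E t l ∩ E t' l')).toReal)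
        ≤ (T:ℝ) * ((T:ℝ) * (LR * (LR * p1 ^ 2 + C))) := by
      calc (∑ t ∈ Finset.Icc 1 T, ∑ t' ∈ (Finset.Icc 1 T).erase t,
          ∑ l ∈ Lset, ∑ l' ∈ Lset, (μ (E t l ∩ E t' l')).toReal)
          ≤ ∑ t ∈ Finset.Icc 1 T, (T:ℝ) * (LR * (LR * p1 ^ 2 + C)) := by
            refine Finset.sum_le_sum fun t ht => ?_
            calc ∑ t' ∈ (Finset.Icc 1 T).erase t,
                ∑ l ∈ Lset, ∑ l' ∈ Lset, (μ (E t l ∩ E t' l')).toReal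
                ≤ ∑ t' ∈ (Finset.Icc 1 T).erase t, LR * (LR * p1 ^ 2 + C) :=
                  Finset.sum_le_sum fun t' ht' =>
                    hC t ht t' (Finset.mem_of_mem_erase ht')
                      (Ne.symm (Finset.ne_of_mem_erase ht'))
              _ = (((Finset.Icc 1 T).erase t).card : ℝ) * (LR * (LR * p1 ^ 2 + C)) := by
                  rw [Finset.sum_const, nsmul_eq_mul]
              _ ≤ (T:ℝ) * (LR * (LR * p1 ^ 2 + C)) := by
                  refine mul_le_mul_of_nonneg_right ?_ hKnn
                  have := Finset.card_le_card (Finset.erase_subset t (Finset.Icc 1 T))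
                  rw [hTcard] at this
                  exact_mod_cast this
        _ = (T:ℝ) * ((T:ℝ) * (LR * (LR * p1 ^ 2 + C))) := by
            rw [Finset.sum_const, hTcard, nsmul_eq_mul]
    exact add_le_add hA1 hA2
  -- rewrite the target sums
  have hRB : ∑ Sh ∈ (Finset.univ : Finset (Finset κ)).filter (· ≠ ∅),
      (T : ℝ) * LR * (∏ k ∈ Sh, (L k : ℝ)) * p2 Sh = (T:ℝ) * (LR * B) := by
    rw [hBdef, Finset.mul_sum, Finset.mul_sum]
    exact Finset.sum_congr rfl fun S _ => by ring
  have hRC : ∑ Sh ∈ (Finset.univ : Finset (Finset κ)).filter (· ≠ Finset.univ),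
      (T : ℝ) ^ 2 * LR * (∏ k ∈ Sh, (L k : ℝ)) * p3 Sh = (T:ℝ) ^ 2 * (LR * C) := by
    rw [hCdef, Finset.mul_sum, Finset.mul_sum]
    exact Finset.sum_congr rfl fun S _ => by ring
  rw [hvar, hRB, hRC]
  have : (∑ t ∈ Finset.Icc 1 T, ∑ t' ∈ Finset.Icc 1 T, ∑ l ∈ Lset, ∑ l' ∈ Lset,
      (μ (E t l ∩ E t' l')).toReal) - ((T:ℝ) * LR * p1) ^ 2
      ≤ ((T:ℝ) * (LR * p1 + LR * B) + (T:ℝ) * ((T:ℝ) * (LR * (LR * p1 ^ 2 + C))))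
        - ((T:ℝ) * LR * p1) ^ 2 := by linarith [hTot_le]
  calc (∑ t ∈ Finset.Icc 1 T, ∑ t' ∈ Finset.Icc 1 T, ∑ l ∈ Lset, ∑ l' ∈ Lset,
      (μ (E t l ∩ E t' l')).toReal) - ((T:ℝ) * LR * p1) ^ 2
      ≤ ((T:ℝ) * (LR * p1 + LR * B) + (T:ℝ) * ((T:ℝ) * (LR * (LR * p1 ^ 2 + C))))
        - ((T:ℝ) * LR * p1) ^ 2 := this
    _ = (T:ℝ) * LR * p1 + (T:ℝ) * (LR * B) + (T:ℝ) ^ 2 * (LR * C) := by ring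
end

section
/- For finite discrete random variables, if $J(\mathcal{A}) < 0$ for subsets $\mathcal{S} \subseteq \{1,\ldots,N\}$, $\mathcal{A} \subseteq \{1,\ldots,N\}$ with $1\in\mathcal{S}$, $1\in\mathcal{A}$, then $J(\mathcal{S}\cap\mathcal{A}) < H(U(\mathcal{S}^c), X(\mathcal{S}^c)\mid X(\mathcal{A}^c), U(\mathcal{A}^c), Q) - \sum_{k\in\mathcal{S}^c\setminus\mathcal{A}^c}[H(U_k\mid Y_k, X_k, Q) + H(X_k\mid Q)]$, where $J$ is defined by $J(\mathcal{B}) := H(U(\mathcal{B}^c), X(\mathcal{B}^c)\mid Q) - \sum_{k\in\mathcal{B}^c}[H(U_k\mid X_k,Y_k,Q) + H(X_k\mid Q)]$. -/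
open MeasureTheory Finset

namespace DDF

/-- The functional `J(B) = H(U(Bᶜ), X(Bᶜ) | Q) - ∑_{k∈Bᶜ}[H(U_k | X_k, Y_k, Q) + H(X_k | Q)]`,
with complements taken within `[1:N]`. -/
noncomputable def J {Ω α β γ δ : Type*} [MeasurableSpace Ω]
    [Fintype α] [Fintype β] [Fintype γ] [Fintype δ]
    (μ : Measure Ω) (N : ℕ) (X : ℕ → Ω → α) (U : ℕ → Ω → β) (Y : ℕ → Ω → γ) (Q : Ω → δ)
    (B : Finset ℕ) : ℝ :=
  condEnt μ (fun ω => (tup U (Finset.Icc 1 N \ B) ω, tup X (Finset.Icc 1 N \ B) ω)) Q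
    - ∑ k ∈ Finset.Icc 1 N \ B,
        (condEnt μ (U k) (fun ω => (X k ω, Y k ω, Q ω)) + condEnt μ (X k) Q)

end DDF


namespace DDF

section Aux

variable {Ω : Type*} [MeasurableSpace Ω]

lemma pr_nonneg' (μ : MeasureTheory.Measure Ω) {α : Type*} (X : Ω → α) (a : α) :
    0 ≤ pr μ X a :=
  ENNReal.toReal_nonneg

lemma pr_comp {α β : Type*} [Fintype α] [MeasurableSpace α] [MeasurableSingletonClass α]
    [DecidableEq β]
    (μ : MeasureTheory.Measure Ω) [MeasureTheory.IsProbabilityMeasure μ]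
    {W : Ω → α} (hW : Measurable W) (f : α → β) (b : β) :
    pr μ (fun ω => f (W ω)) b = ∑ a ∈ Finset.univ.filter (fun a => f a = b), pr μ W a := by
  have hset : (fun ω => f (W ω)) ⁻¹' {b}
      = ⋃ a ∈ Finset.univ.filter (fun a => f a = b), W ⁻¹' {a} := by
    ext ω
    simp only [Set.mem_preimage, Set.mem_singleton_iff, Set.mem_iUnion, Finset.mem_filter,
      Finset.mem_univ, true_and]
    constructor
    · intro h; exact ⟨W ω, h, rfl⟩
    · rintro ⟨a, h1, h2⟩; rw [h2]; exact h1
  rw [pr, hset, measure_biUnion_finset]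
  · rw [ENNReal.toReal_sum (fun a _ => MeasureTheory.measure_ne_top μ _)]
    rfl
  · intro a _ a' _ hne
    simp only [Function.onFun]
    exact Set.disjoint_left.2 fun ω h1 h2 => hne (by
      simp only [Set.mem_preimage, Set.mem_singleton_iff] at h1 h2
      rw [← h1, ← h2])
  · intro a _; exact hW (measurableSet_singleton a)

lemma ent_comp_le {α β : Type*} [Fintype α] [Fintype β]
    [MeasurableSpace α] [MeasurableSingletonClass α]
    (μ : MeasureTheory.Measure Ω) [MeasureTheory.IsProbabilityMeasure μ]
    {W : Ω → α} (hW : Measurable W) (f : α → β) :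
    ent μ (fun ω => f (W ω)) ≤ ent μ W := by
  classical
  rw [ent, ent, neg_le_neg_iff]
  calc ∑ a : α, pr μ W a * Real.logb 2 (pr μ W a)
      = ∑ b : β, ∑ a ∈ Finset.univ.filter (fun a => f a = b),
          pr μ W a * Real.logb 2 (pr μ W a) := by
        exact (Finset.sum_fiberwise_of_maps_to (fun a _ => Finset.mem_univ (f a)) _).symm
    _ ≤ ∑ b : β, pr μ (fun ω => f (W ω)) b * Real.logb 2 (pr μ (fun ω => f (W ω)) b) := by
        apply Finset.sum_le_sum
        intro b _
        rw [pr_comp μ hW f b, Finset.sum_mul]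
        apply Finset.sum_le_sum
        intro a ha
        rcases eq_or_lt_of_le (pr_nonneg' μ W a) with h0 | h0
        · rw [← h0]; simp
        · have hle : pr μ W a ≤ ∑ a' ∈ Finset.univ.filter (fun a' => f a' = b), pr μ W a' :=
            Finset.single_le_sum (fun a' _ => pr_nonneg' μ W a') ha
          exact mul_le_mul_of_nonneg_left
            (Real.logb_le_logb_of_le one_lt_two h0 hle) (le_of_lt h0)

lemma ent_comp_eq {α β : Type*} [Fintype α] [Fintype β]
    [MeasurableSpace α] [MeasurableSingletonClass α]
    [MeasurableSpace β] [MeasurableSingletonClass β]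
    (μ : MeasureTheory.Measure Ω) [MeasureTheory.IsProbabilityMeasure μ]
    {W : Ω → α} (hW : Measurable W) (f : α → β)
    (hf : Function.Injective f) :
    ent μ (fun ω => f (W ω)) = ent μ W := by
  have hΩ : Nonempty Ω := by
    by_contra h
    have : μ Set.univ = 0 := by
      rw [Set.univ_eq_empty_iff.2 (not_nonempty_iff.1 h)]; simp
    simpa [this] using (MeasureTheory.measure_univ (μ := μ))
  have hα : Nonempty α := ⟨W (Classical.choice hΩ)⟩
  refine le_antisymm (ent_comp_le μ hW f) ?_
  have hmf : Measurable f := measurable_of_countable f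
  have hmfW : Measurable (fun ω => f (W ω)) := hmf.comp hW
  have key := ent_comp_le μ hmfW (Function.invFun f)
  rwa [show (fun ω => Function.invFun f ((fun ω => f (W ω)) ω)) = W from
    funext fun ω => Function.leftInverse_invFun hf (W ω)] at key

end Aux

end DDF

open DDF in
/-- if `J(A) < 0` then
`J(S∩A) < H(U(Sᶜ), X(Sᶜ) | X(Aᶜ), U(Aᶜ), Q) - ∑_{k∈Sᶜ\Aᶜ}[H(U_k|Y_k,X_k,Q) + H(X_k|Q)]`
(strict-inequality step of Lemma 1, Appendix D). -/
theorem stmt11 {Ω α β γ δ : Type*} [MeasurableSpace Ω]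
    [MeasurableSpace α] [MeasurableSingletonClass α] [Fintype α]
    [MeasurableSpace β] [MeasurableSingletonClass β] [Fintype β]
    [MeasurableSpace γ] [MeasurableSingletonClass γ] [Fintype γ]
    [MeasurableSpace δ] [MeasurableSingletonClass δ] [Fintype δ]
    (μ : Measure Ω) [IsProbabilityMeasure μ] (N : ℕ)
    (X : ℕ → Ω → α) (U : ℕ → Ω → β) (Y : ℕ → Ω → γ) (Q : Ω → δ)
    (hX : ∀ k, Measurable (X k)) (hU : ∀ k, Measurable (U k)) (hY : ∀ k, Measurable (Y k))
    (hQ : Measurable Q)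
    (S A : Finset ℕ) (hS : S ⊆ Finset.Icc 1 N) (hA : A ⊆ Finset.Icc 1 N)
    (h1S : 1 ∈ S) (h1A : 1 ∈ A)
    (hJA : J μ N X U Y Q A < 0) :
    J μ N X U Y Q (S ∩ A)
      < condEnt μ
          (fun ω => (tup U (Finset.Icc 1 N \ S) ω, tup X (Finset.Icc 1 N \ S) ω))
          (fun ω => (tup X (Finset.Icc 1 N \ A) ω, tup U (Finset.Icc 1 N \ A) ω, Q ω))
        - ∑ k ∈ (Finset.Icc 1 N \ S) \ (Finset.Icc 1 N \ A),
            (condEnt μ (U k) (fun ω => (Y k ω, X k ω, Q ω)) + condEnt μ (X k) Q) := by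
  classical
  set Sc := Finset.Icc 1 N \ S with hScdef
  set Ac := Finset.Icc 1 N \ A with hAcdef
  set D := Finset.Icc 1 N \ (S ∩ A) with hDdef
  have hUc : D = Sc ∪ Ac := Finset.sdiff_inter_distrib_right _ _ _
  have hmemD : ∀ k : ℕ, k ∈ D → k ∉ Sc → k ∈ Ac := fun k hk h =>
    (Finset.mem_union.1 (hUc ▸ hk)).resolve_left h
  -- measurability of tuples
  have hTX : ∀ B : Finset ℕ, Measurable (tup X B) := fun B =>
    measurable_pi_lambda _ fun k => hX k.1
  have hTU : ∀ B : Finset ℕ, Measurable (tup U B) := fun B =>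
    measurable_pi_lambda _ fun k => hU k.1
  -- per-index term reordering
  have hterm : ∀ k : ℕ,
      condEnt μ (U k) (fun ω => (Y k ω, X k ω, Q ω))
        = condEnt μ (U k) (fun ω => (X k ω, Y k ω, Q ω)) := by
    intro k
    have hW1 : Measurable (fun ω => (X k ω, Y k ω, Q ω)) :=
      (hX k).prodMk ((hY k).prodMk hQ)
    have hW2 : Measurable (fun ω => (U k ω, X k ω, Y k ω, Q ω)) :=
      (hU k).prodMk hW1
    have h1 : ent μ (fun ω => (Y k ω, X k ω, Q ω))
        = ent μ (fun ω => (X k ω, Y k ω, Q ω)) := by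
      have := ent_comp_eq μ hW1 (fun p : α × γ × δ => (p.2.1, p.1, p.2.2))
        (fun p q h => by
          simp only [Prod.ext_iff] at h ⊢
          exact ⟨h.2.1, h.1, h.2.2⟩)
      exact this
    have h2 : ent μ (fun ω => (U k ω, Y k ω, X k ω, Q ω))
        = ent μ (fun ω => (U k ω, X k ω, Y k ω, Q ω)) := by
      have := ent_comp_eq μ hW2
        (fun p : β × α × γ × δ => (p.1, p.2.2.1, p.2.1, p.2.2.2))
        (fun p q h => by
          simp only [Prod.ext_iff] at h ⊢
          exact ⟨h.1, h.2.2.1, h.2.1, h.2.2.2⟩)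
      exact this
    simp only [condEnt]
    rw [h1, h2]
  -- entropy chain inequality
  set T : Ω → (({k // k ∈ Sc} → β) × ({k // k ∈ Sc} → α))
      × (({k // k ∈ Ac} → α) × ({k // k ∈ Ac} → β) × δ) :=
    fun ω => ((tup U Sc ω, tup X Sc ω), (tup X Ac ω, tup U Ac ω, Q ω)) with hTdef
  have hT : Measurable T :=
    ((hTU Sc).prodMk (hTX Sc)).prodMk ((hTX Ac).prodMk ((hTU Ac).prodMk hQ))
  have hent1 : ent μ (fun ω => ((tup U D ω, tup X D ω), Q ω)) ≤ ent μ T := by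
    set g : (({k // k ∈ Sc} → β) × ({k // k ∈ Sc} → α))
        × (({k // k ∈ Ac} → α) × ({k // k ∈ Ac} → β) × δ)
        → (({k // k ∈ D} → β) × ({k // k ∈ D} → α)) × δ :=
      fun p => ((fun k => if h : k.1 ∈ Sc then p.1.1 ⟨k.1, h⟩
                  else p.2.2.1 ⟨k.1, hmemD k.1 k.2 h⟩,
                 fun k => if h : k.1 ∈ Sc then p.1.2 ⟨k.1, h⟩
                  else p.2.1 ⟨k.1, hmemD k.1 k.2 h⟩), p.2.2.2) with hgdef
    have key := ent_comp_le μ hT g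
    have heq : (fun ω => g (T ω)) = fun ω => ((tup U D ω, tup X D ω), Q ω) := by
      funext ω
      simp only [hgdef, hTdef]
      refine Prod.ext (Prod.ext ?_ ?_) rfl
      · funext k
        by_cases h : k.1 ∈ Sc <;> simp [tup, h]
      · funext k
        by_cases h : k.1 ∈ Sc <;> simp [tup, h]
    rwa [heq] at key
  -- relabeling the conditioning tuple
  have hent2 : ent μ (fun ω => ((tup U Ac ω, tup X Ac ω), Q ω))
      = ent μ (fun ω => (tup X Ac ω, tup U Ac ω, Q ω)) := by
    have hW : Measurable (fun ω => (tup X Ac ω, tup U Ac ω, Q ω)) :=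
      (hTX Ac).prodMk ((hTU Ac).prodMk hQ)
    have := ent_comp_eq μ hW
      (fun p : ({k // k ∈ Ac} → α) × ({k // k ∈ Ac} → β) × δ => ((p.2.1, p.1), p.2.2))
      (fun p q h => by
        simp only [Prod.ext_iff] at h ⊢
        exact ⟨h.1.2, h.1.1, h.2⟩)
    exact this
  -- sum splitting
  have hsum : ∑ k ∈ D, (condEnt μ (U k) (fun ω => (X k ω, Y k ω, Q ω)) + condEnt μ (X k) Q)
      = (∑ k ∈ Ac, (condEnt μ (U k) (fun ω => (X k ω, Y k ω, Q ω)) + condEnt μ (X k) Q))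
        + ∑ k ∈ Sc \ Ac,
            (condEnt μ (U k) (fun ω => (X k ω, Y k ω, Q ω)) + condEnt μ (X k) Q) := by
    rw [← Finset.sum_union Finset.sdiff_disjoint.symm]
    congr 1
    rw [hUc, Finset.union_sdiff_self_eq_union, Finset.union_comm]
  have hsum2 : ∑ k ∈ Sc \ Ac,
        (condEnt μ (U k) (fun ω => (Y k ω, X k ω, Q ω)) + condEnt μ (X k) Q)
      = ∑ k ∈ Sc \ Ac,
        (condEnt μ (U k) (fun ω => (X k ω, Y k ω, Q ω)) + condEnt μ (X k) Q) :=
    Finset.sum_congr rfl fun k _ => by rw [hterm k]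
  simp only [J] at hJA ⊢
  rw [← hDdef]
  rw [← hAcdef] at hJA
  rw [hsum, hsum2]
  simp only [condEnt] at hJA ⊢
  simp only [hTdef] at hent1
  linarith [hent1, hent2, hJA]
end
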